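/- arXiv:1408.2008 — 6 statements merged into one kernel-verified Lean document; each statement's English description precedes it below -/
import Mathlib

section
/- For all vectors a, b in ℝ³ with a ≠ 0 and b ≠ 0, cosh‖a + b‖ ≤ cosh‖a‖ · cosh‖b‖ + (⟨a,b⟩ / (‖a‖ · ‖b‖)) · sinh‖a‖ · sinh‖b‖, where ⟨a,b⟩ is the Euclidean inner product and ‖·‖ the Euclidean norm. -/
open Real Set Filter

private lemma sinh_le_mul_cosh {r : ℝ} (hr : 0 ≤ r) : Real.sinh r ≤ r * Real.cosh r := by
  set h : ℝ → ℝ := fun t => t * Real.cosh t - Real.sinh t with hh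
  have hd : ∀ t : ℝ, HasDerivAt h (t * Real.sinh t) t := by
    intro t
    have := ((hasDerivAt_id t).mul (Real.hasDerivAt_cosh t)).sub (Real.hasDerivAt_sinh t)
    exact this.congr_deriv (by simp only [id, one_mul]; ring)
  have hmono : MonotoneOn h (Set.Ici 0) := by
    apply monotoneOn_of_deriv_nonneg (convex_Ici 0)
    · exact fun t _ => ((hd t).differentiableAt).continuousAt.continuousWithinAt
    · exact fun t _ => ((hd t).differentiableAt).differentiableWithinAt
    · intro t ht
      rw [interior_Ici] at ht
      rw [(hd t).deriv]
      exact mul_nonneg (le_of_lt ht) (Real.sinh_nonneg_iff.mpr (le_of_lt ht))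
  have := hmono (Set.self_mem_Ici) (Set.mem_Ici.mpr hr) hr
  simp only [hh, Real.cosh_zero, Real.sinh_zero, mul_one, zero_mul, sub_zero, zero_sub,
    neg_zero] at this
  linarith

private lemma convexOn_cosh_sqrt : ConvexOn ℝ (Set.Ici 0) (fun u => Real.cosh (Real.sqrt u)) := by
  set f : ℝ → ℝ := fun u => Real.cosh (Real.sqrt u) with hf
  set g : ℝ → ℝ := fun u => Real.sinh (Real.sqrt u) / (2 * Real.sqrt u) with hg
  have hsq : ∀ u : ℝ, 0 < u → Real.sqrt u ≠ 0 := fun u hu => ne_of_gt (Real.sqrt_pos.mpr hu)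
  have hfd : ∀ u : ℝ, 0 < u → HasDerivAt f (g u) u := by
    intro u hu
    have hs := Real.hasDerivAt_sqrt (ne_of_gt hu)
    have := (Real.hasDerivAt_cosh (Real.sqrt u)).comp u hs
    exact this.congr_deriv (by simp only [hg]; ring)
  have hgd : ∀ u : ℝ, 0 < u →
      HasDerivAt g ((Real.cosh (Real.sqrt u) - Real.sinh (Real.sqrt u) / Real.sqrt u) / (4 * u)) u := by
    intro u hu
    have hs := Real.hasDerivAt_sqrt (ne_of_gt hu)
    have h1 : HasDerivAt (fun v => Real.sinh (Real.sqrt v))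
        (Real.cosh (Real.sqrt u) * (1 / (2 * Real.sqrt u))) u :=
      (Real.hasDerivAt_sinh (Real.sqrt u)).comp u hs
    have h2 : HasDerivAt (fun v => 2 * Real.sqrt v) (2 * (1 / (2 * Real.sqrt u))) u :=
      hs.const_mul 2
    have h3 := h1.div h2 (by positivity)
    refine h3.congr_deriv ?_
    have hsu : Real.sqrt u ^ 2 = u := Real.sq_sqrt hu.le
    rw [mul_pow, hsu]
    field_simp
    ring
  have hderiv_eq : ∀ u : ℝ, 0 < u → deriv f u = g u := fun u hu => (hfd u hu).deriv
  have hd2 : ∀ u : ℝ, 0 < u → HasDerivAt (deriv f)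
      ((Real.cosh (Real.sqrt u) - Real.sinh (Real.sqrt u) / Real.sqrt u) / (4 * u)) u := by
    intro u hu
    refine (hgd u hu).congr_of_eventuallyEq ?_
    filter_upwards [Ioi_mem_nhds hu] with v hv
    exact hderiv_eq v hv
  apply convexOn_of_deriv2_nonneg (convex_Ici 0)
  · exact (Real.continuous_cosh.comp Real.continuous_sqrt).continuousOn
  · intro u hu
    rw [interior_Ici] at hu
    exact (hfd u hu).differentiableAt.differentiableWithinAt
  · intro u hu
    rw [interior_Ici] at hu
    exact (hd2 u hu).differentiableAt.differentiableWithinAt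
  · intro u hu
    rw [interior_Ici] at hu
    have : deriv^[2] f u = (Real.cosh (Real.sqrt u) - Real.sinh (Real.sqrt u) / Real.sqrt u) / (4 * u) := by
      simp only [Function.iterate_succ, Function.iterate_zero, Function.comp_apply, id_eq]
      exact (hd2 u hu).deriv
    rw [this]
    have hr : 0 < Real.sqrt u := Real.sqrt_pos.mpr hu
    have := sinh_le_mul_cosh hr.le
    have hnum : 0 ≤ Real.cosh (Real.sqrt u) - Real.sinh (Real.sqrt u) / Real.sqrt u := by
      rw [sub_nonneg, div_le_iff₀ hr]
      linarith
    exact div_nonneg hnum (by have := Set.mem_Ioi.mp hu; linarith)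

/-- The Golden–Thompson inequality for `2 × 2` traceless Hermitian matrices, written in terms of
the coefficient vectors with respect to the Pauli matrices: for nonzero `a, b ∈ ℝ³`,
`cosh ‖a + b‖ ≤ cosh ‖a‖ cosh ‖b‖ + (⟨a,b⟩ / (‖a‖ ‖b‖)) sinh ‖a‖ sinh ‖b‖`. -/
theorem golden_thompson_two_by_two (a b : EuclideanSpace ℝ (Fin 3)) (ha : a ≠ 0) (hb : b ≠ 0) :
    Real.cosh ‖a + b‖ ≤ Real.cosh ‖a‖ * Real.cosh ‖b‖ +
      ((inner ℝ a b : ℝ) / (‖a‖ * ‖b‖)) * Real.sinh ‖a‖ * Real.sinh ‖b‖ := by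
  set x := ‖a‖ with hx
  set y := ‖b‖ with hy
  set s : ℝ := inner ℝ a b with hs
  have hx0 : 0 < x := norm_pos_iff.mpr ha
  have hy0 : 0 < y := norm_pos_iff.mpr hb
  have hcs : |s| ≤ x * y := abs_real_inner_le_norm a b
  set t : ℝ := s / (x * y) with ht
  have ht1 : |t| ≤ 1 := by
    rw [ht, abs_div, abs_of_pos (by positivity : (0:ℝ) < x * y), div_le_one (by positivity)]
    exact hcs
  have htxy : t * (x * y) = s := by
    rw [ht]; field_simp
  have hlam1 : (0:ℝ) ≤ (1 + t) / 2 := by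
    have := (abs_le.mp ht1).1; linarith
  have hlam2 : (0:ℝ) ≤ (1 - t) / 2 := by
    have := (abs_le.mp ht1).2; linarith
  have hsum : (1 + t) / 2 + (1 - t) / 2 = 1 := by ring
  have hconv := convexOn_cosh_sqrt.2 (Set.mem_Ici.mpr (sq_nonneg (x + y)))
    (Set.mem_Ici.mpr (sq_nonneg (x - y))) hlam1 hlam2 hsum
  have hnorm : ‖a + b‖ ^ 2 = x ^ 2 + 2 * s + y ^ 2 := norm_add_sq_real a b
  have hkey : (1 + t) / 2 * (x + y) ^ 2 + (1 - t) / 2 * (x - y) ^ 2 = ‖a + b‖ ^ 2 := by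
    rw [hnorm]
    nlinarith [htxy]
  simp only [smul_eq_mul] at hconv
  rw [hkey] at hconv
  rw [Real.sqrt_sq (norm_nonneg _)] at hconv
  have h1 : Real.sqrt ((x + y) ^ 2) = x + y := Real.sqrt_sq (by positivity)
  have h2 : Real.sqrt ((x - y) ^ 2) = |x - y| := Real.sqrt_sq_eq_abs _
  rw [h1, h2, Real.cosh_abs] at hconv
  calc Real.cosh ‖a + b‖ ≤ (1 + t) / 2 * Real.cosh (x + y) + (1 - t) / 2 * Real.cosh (x - y) :=
        hconv
    _ = Real.cosh x * Real.cosh y + t * Real.sinh x * Real.sinh y := by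
        rw [Real.cosh_add, Real.cosh_sub]; ring
end

section
/- Let A and B be N×N complex Hermitian matrices and let k ≥ 0 be an integer. Then Tr((AB)^{2^k}) ≤ Tr(A^{2^k} B^{2^k}); both traces are real numbers. -/
namespace TracePowAux

open Matrix

variable {N : ℕ}

abbrev Mat (N : ℕ) := Matrix (Fin N) (Fin N) ℂ

lemma tr_nonneg (M : Mat N) : 0 ≤ (Matrix.trace (M * Mᴴ)).re := by
  have h : Matrix.trace (M * Mᴴ) = ∑ i, ∑ j, M i j * star (M i j) := by
    simp [Matrix.trace, Matrix.diag, Matrix.mul_apply, Matrix.conjTranspose_apply]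
  rw [h]
  simp only [Complex.re_sum]
  refine Finset.sum_nonneg fun i _ => Finset.sum_nonneg fun j _ => ?_
  rw [show star (M i j) = (starRingEnd ℂ) (M i j) from rfl, Complex.mul_conj]
  simp [Complex.normSq_nonneg]

lemma tr_conjT_re (M : Mat N) : (Matrix.trace Mᴴ).re = (Matrix.trace M).re := by
  rw [Matrix.trace_conjTranspose]; simp

/-- `Re Tr(M²) ≤ Tr(M Mᴴ)` -/
lemma U1 (M : Mat N) : (Matrix.trace (M * M)).re ≤ (Matrix.trace (M * Mᴴ)).re := by
  have h0 := tr_nonneg (M - Mᴴ)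
  have hexp : (M - Mᴴ) * (M - Mᴴ)ᴴ = M * Mᴴ - M * M - Mᴴ * Mᴴ + Mᴴ * M := by
    rw [conjTranspose_sub, conjTranspose_conjTranspose]
    noncomm_ring
  rw [hexp] at h0
  have h1 : (Matrix.trace (Mᴴ * M)).re = (Matrix.trace (M * Mᴴ)).re := by
    rw [Matrix.trace_mul_comm]
  have h2 : (Matrix.trace (Mᴴ * Mᴴ)).re = (Matrix.trace (M * M)).re := by
    rw [← Matrix.conjTranspose_mul, tr_conjT_re]
  simp only [Matrix.trace_add, Matrix.trace_sub, Complex.add_re, Complex.sub_re] at h0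
  rw [h1, h2] at h0
  linarith

/-- Cauchy–Schwarz with equal norms: for Hermitian `P Q` with `Tr P² = Tr Q²`,
`Tr(PQ) ≤ Tr(P²)`. -/
lemma U2 (P Q : Mat N) (hP : P.IsHermitian) (hQ : Q.IsHermitian)
    (h : (Matrix.trace (P * P)).re = (Matrix.trace (Q * Q)).re) :
    (Matrix.trace (P * Q)).re ≤ (Matrix.trace (P * P)).re := by
  have h0 := tr_nonneg (P - Q)
  have hexp : (P - Q) * (P - Q)ᴴ = P * P - P * Q - Q * P + Q * Q := by
    rw [conjTranspose_sub, hP.eq, hQ.eq]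
    noncomm_ring
  rw [hexp] at h0
  have h1 : (Matrix.trace (Q * P)).re = (Matrix.trace (P * Q)).re := by
    rw [Matrix.trace_mul_comm]
  simp only [Matrix.trace_add, Matrix.trace_sub, Complex.add_re, Complex.sub_re] at h0
  rw [h1] at h0
  linarith

lemma pow_mul_eq (M L : Mat N) : ∀ t, (M * L) ^ t * M = M * (L * M) ^ t := by
  intro t
  induction t with
  | zero => simp
  | succ t ih =>
      rw [pow_succ, pow_succ, mul_assoc ((M*L)^t) (M*L) M, mul_assoc M L M,
        ← mul_assoc ((M*L)^t) M (L*M), ih, mul_assoc]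

lemma trace_cyc (M L : Mat N) (s : ℕ) (hs : s ≠ 0) :
    Matrix.trace ((M * L) ^ s) = Matrix.trace ((L * M) ^ s) := by
  cases s with
  | zero => exact absurd rfl hs
  | succ t =>
    have key : (M * L) ^ (t + 1) = M * (L * (M * L) ^ t) := by
      rw [pow_succ']; rw [mul_assoc]
    rw [key, Matrix.trace_mul_comm, mul_assoc, pow_mul_eq, ← mul_assoc, ← pow_succ']

def MainProp (N k : ℕ) : Prop :=
  ∀ A B : Mat N, A.IsHermitian → B.IsHermitian →
    (Matrix.trace ((A * B) ^ 2 ^ k)).re ≤ (Matrix.trace (A ^ 2 ^ k * B ^ 2 ^ k)).re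

lemma pow2_ne (j : ℕ) : (2:ℕ) ^ j ≠ 0 := by positivity

lemma lemD (k : ℕ) : ∀ (j : ℕ) (X : Mat N), (∀ i, i < k + j → MainProp N i) →
    (Matrix.trace (((Xᴴ) ^ 2 ^ k * X ^ 2 ^ k) ^ 2 ^ j)).re
      ≤ (Matrix.trace ((Xᴴ * X) ^ 2 ^ (k + j))).re := by
  induction k with
  | zero =>
      intro j X _
      simp [pow_one]
  | succ k ih =>
      intro j X h
      set C := X ^ 2 ^ k with hC
      set D := (Xᴴ) ^ 2 ^ k with hD
      have hDC : D = Cᴴ := by rw [hC, hD, Matrix.conjTranspose_pow]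
      have hee : (2:ℕ) ^ (k+1) = 2 ^ k + 2 ^ k := by rw [pow_succ, Nat.mul_two]
      have hsplit : X ^ 2 ^ (k+1) = C * C := by rw [hC, hee, pow_add]
      have hsplitD : (Xᴴ) ^ 2 ^ (k+1) = D * D := by rw [hD, hee, pow_add]
      set Q := D * C with hQdef
      set P := C * D with hPdef
      have hQ : Q.IsHermitian := by
        rw [Matrix.IsHermitian, hQdef, Matrix.conjTranspose_mul, hDC,
          Matrix.conjTranspose_conjTranspose]
      have hP : P.IsHermitian := by
        rw [Matrix.IsHermitian, hPdef, Matrix.conjTranspose_mul, hDC,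
          Matrix.conjTranspose_conjTranspose]
      -- Step A : rotation
      have stepA : Matrix.trace (((Xᴴ) ^ 2 ^ (k+1) * X ^ 2 ^ (k+1)) ^ 2 ^ j)
          = Matrix.trace ((Q * P) ^ 2 ^ j) := by
        rw [hsplit, hsplitD]
        have e1 : D * D * (C * C) = D * (D * C * C) := by noncomm_ring
        have e2 : D * C * C * D = Q * P := by rw [hQdef, hPdef]; noncomm_ring
        rw [e1, trace_cyc _ _ _ (pow2_ne j), e2]
      -- Step B : MainProp j applied to Q, P
      have stepB : (Matrix.trace ((Q * P) ^ 2 ^ j)).re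
          ≤ (Matrix.trace (Q ^ 2 ^ j * P ^ 2 ^ j)).re :=
        h j (by omega) Q P hQ hP
      -- Step C : Cauchy–Schwarz with equal norms
      have hcyc : Matrix.trace (Q ^ 2 ^ (j+1)) = Matrix.trace (P ^ 2 ^ (j+1)) := by
        rw [hQdef, hPdef]; exact trace_cyc D C _ (pow2_ne (j+1))
      have hej : (2:ℕ) ^ (j+1) = 2 ^ j + 2 ^ j := by rw [pow_succ, Nat.mul_two]
      have hsq : ∀ R : Mat N, R ^ 2 ^ j * R ^ 2 ^ j = R ^ 2 ^ (j+1) := by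
        intro R; rw [hej, pow_add]
      have stepC : (Matrix.trace (Q ^ 2 ^ j * P ^ 2 ^ j)).re
          ≤ (Matrix.trace (Q ^ 2 ^ (j+1))).re := by
        have := U2 (Q ^ 2 ^ j) (P ^ 2 ^ j) (hQ.pow _) (hP.pow _) (by
          rw [hsq Q, hsq P, hcyc])
        rwa [hsq Q] at this
      -- Step D : induction hypothesis at (k, j+1)
      have stepD : (Matrix.trace (Q ^ 2 ^ (j+1))).re
          ≤ (Matrix.trace ((Xᴴ * X) ^ 2 ^ (k + (j+1)))).re := by
        have := ih (j+1) X (by intro i hi; exact h i (by omega))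
        rwa [← hD, ← hC, ← hQdef] at this
      have : k + (j + 1) = k + 1 + j := by omega
      rw [this] at stepD
      rw [stepA]
      exact stepB.trans (stepC.trans stepD)

lemma lemPsi (k : ℕ) (X : Mat N) (h : ∀ i, i < k → MainProp N i) :
    (Matrix.trace (X ^ 2 ^ (k+1))).re ≤ (Matrix.trace ((Xᴴ * X) ^ 2 ^ k)).re := by
  have hsplit : X ^ 2 ^ (k+1) = X ^ 2 ^ k * X ^ 2 ^ k := by
    rw [show (2:ℕ) ^ (k+1) = 2 ^ k + 2 ^ k by rw [pow_succ, Nat.mul_two], pow_add]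
  have h1 := U1 (X ^ 2 ^ k)
  have h2 : (Matrix.trace (X ^ 2 ^ k * (X ^ 2 ^ k)ᴴ)).re
      = (Matrix.trace (((Xᴴ) ^ 2 ^ k * X ^ 2 ^ k) ^ 2 ^ 0)).re := by
    rw [Matrix.trace_mul_comm, Matrix.conjTranspose_pow, pow_zero, pow_one]
  have h3 := lemD k 0 X (by intro i hi; exact h i (by omega))
  rw [hsplit]
  rw [h2] at h1
  simpa using h1.trans h3

lemma mainAll (N : ℕ) : ∀ k, MainProp N k := by
  intro k
  induction k using Nat.strong_induction_on with
  | _ k ih =>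
    match k with
    | 0 => intro A B hA hB; simp
    | (k+1) =>
      intro A B hA hB
      have step1 := lemPsi k (A * B) (fun i hi => ih i (by omega))
      have hABH : (A * B)ᴴ = B * A := by
        rw [Matrix.conjTranspose_mul, hA.eq, hB.eq]
      have step2 : Matrix.trace ((B * A * (A * B)) ^ 2 ^ k)
          = Matrix.trace ((A ^ 2 * B ^ 2) ^ 2 ^ k) := by
        have e1 : B * A * (A * B) = B * (A * A * B) := by noncomm_ring
        have e2 : A * A * B * B = A ^ 2 * B ^ 2 := by noncomm_ring
        rw [e1, trace_cyc _ _ _ (pow2_ne k), e2]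
      have step3 := ih k (by omega) (A ^ 2) (B ^ 2) (hA.pow 2) (hB.pow 2)
      have hpows : ∀ R : Mat N, (R ^ 2) ^ 2 ^ k = R ^ 2 ^ (k+1) := by
        intro R; rw [← pow_mul]; congr 1; rw [pow_succ']
      rw [hpows A, hpows B] at step3
      rw [hABH, step2] at step1
      exact step1.trans step3

lemma trace_real_prod (m : ℕ) (hm : m ≠ 0) (A B : Mat N)
    (hA : A.IsHermitian) (hB : B.IsHermitian) :
    (Matrix.trace ((A * B) ^ m)).im = 0 := by
  rw [← Complex.conj_eq_iff_im]
  have : (starRingEnd ℂ) (Matrix.trace ((A * B) ^ m))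
      = Matrix.trace (((A * B) ^ m)ᴴ) := by
    rw [Matrix.trace_conjTranspose]; rfl
  rw [this, Matrix.conjTranspose_pow, Matrix.conjTranspose_mul, hA.eq, hB.eq,
    trace_cyc _ _ _ hm]

lemma trace_real_powmul (m : ℕ) (A B : Mat N)
    (hA : A.IsHermitian) (hB : B.IsHermitian) :
    (Matrix.trace (A ^ m * B ^ m)).im = 0 := by
  rw [← Complex.conj_eq_iff_im]
  have : (starRingEnd ℂ) (Matrix.trace (A ^ m * B ^ m))
      = Matrix.trace ((A ^ m * B ^ m)ᴴ) := by
    rw [Matrix.trace_conjTranspose]; rfl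
  rw [this, Matrix.conjTranspose_mul, (hA.pow m).eq, (hB.pow m).eq,
    Matrix.trace_mul_comm]

end TracePowAux

/-- For `N × N` complex Hermitian matrices `A`, `B` and an integer `k ≥ 0`,
`Tr ((AB)^{2^k}) ≤ Tr (A^{2^k} B^{2^k})`; both traces are real numbers. -/
theorem trace_pow_two_pow_le (N k : ℕ) (A B : Matrix (Fin N) (Fin N) ℂ)
    (hA : A.IsHermitian) (hB : B.IsHermitian) :
    (Matrix.trace ((A * B) ^ 2 ^ k)).im = 0 ∧
    (Matrix.trace (A ^ 2 ^ k * B ^ 2 ^ k)).im = 0 ∧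
    (Matrix.trace ((A * B) ^ 2 ^ k)).re ≤ (Matrix.trace (A ^ 2 ^ k * B ^ 2 ^ k)).re :=
  ⟨TracePowAux.trace_real_prod _ (TracePowAux.pow2_ne k) A B hA hB,
   TracePowAux.trace_real_powmul _ A B hA hB,
   TracePowAux.mainAll N k A B hA hB⟩
end

section
/- (Hardy–Littlewood–Pólya / Karamata majorization lemma, weak form) Let a₁, …, a_m and b₁, …, b_m be real numbers with b₁ ≥ b₂ ≥ ⋯ ≥ b_m, and suppose b₁ + ⋯ + b_q ≤ a₁ + ⋯ + a_q for every q = 1, …, m. Then for every convex increasing function ω : ℝ → ℝ, ω(b₁) + ⋯ + ω(b_m) ≤ ω(a₁) + ⋯ + ω(a_m). -/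
open Finset

noncomputable def rslope (ω : ℝ → ℝ) (x : ℝ) : ℝ :=
  sInf {s : ℝ | ∃ y, x < y ∧ s = (ω y - ω x) / (y - x)}

lemma rslope_set_nonempty (ω : ℝ → ℝ) (x : ℝ) :
    {s : ℝ | ∃ y, x < y ∧ s = (ω y - ω x) / (y - x)}.Nonempty :=
  ⟨(ω (x+1) - ω x) / (x + 1 - x), x + 1, by linarith, rfl⟩

lemma rslope_set_bdd (ω : ℝ → ℝ) (hmono : Monotone ω) (x : ℝ) :
    0 ∈ lowerBounds {s : ℝ | ∃ y, x < y ∧ s = (ω y - ω x) / (y - x)} := by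
  rintro s ⟨y, hy, rfl⟩
  have h1 := hmono hy.le
  have h2 : (0:ℝ) ≤ y - x := by linarith
  exact div_nonneg (by linarith) h2

lemma rslope_nonneg (ω : ℝ → ℝ) (hmono : Monotone ω) (x : ℝ) : 0 ≤ rslope ω x :=
  le_csInf (rslope_set_nonempty ω x) (rslope_set_bdd ω hmono x)

lemma rslope_le_slope (ω : ℝ → ℝ) (hmono : Monotone ω) {x y : ℝ} (h : x < y) :
    rslope ω x ≤ (ω y - ω x) / (y - x) :=
  csInf_le ⟨0, rslope_set_bdd ω hmono x⟩ ⟨y, h, rfl⟩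

lemma slope_le_rslope (ω : ℝ → ℝ) (hconv : ConvexOn ℝ Set.univ ω)
    {y x : ℝ} (h : y < x) : (ω x - ω y) / (x - y) ≤ rslope ω x :=
  le_csInf (rslope_set_nonempty ω x) (by
    rintro s ⟨z, hz, rfl⟩
    exact hconv.slope_mono_adjacent trivial trivial h hz)

lemma rslope_support (ω : ℝ → ℝ) (hconv : ConvexOn ℝ Set.univ ω) (hmono : Monotone ω)
    (x y : ℝ) : ω x + rslope ω x * (y - x) ≤ ω y := by
  rcases lt_trichotomy x y with h | rfl | h
  · have h1 := rslope_le_slope ω hmono h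
    have h2 : (0:ℝ) < y - x := by linarith
    nlinarith [mul_le_mul_of_nonneg_right h1 h2.le, div_mul_cancel₀ (ω y - ω x) h2.ne']
  · simp
  · have h1 := slope_le_rslope ω hconv h
    have h2 : (0:ℝ) < x - y := by linarith
    nlinarith [mul_le_mul_of_nonneg_right h1 h2.le, div_mul_cancel₀ (ω x - ω y) h2.ne']

lemma rslope_mono (ω : ℝ → ℝ) (hconv : ConvexOn ℝ Set.univ ω) (hmono : Monotone ω) :
    Monotone (rslope ω) := by
  intro x y hxy
  rcases eq_or_lt_of_le hxy with rfl | h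
  · exact le_refl _
  refine le_csInf (rslope_set_nonempty ω y) ?_
  rintro s ⟨z, hz, rfl⟩
  calc rslope ω x ≤ (ω y - ω x) / (y - x) := rslope_le_slope ω hmono h
    _ ≤ (ω z - ω y) / (z - y) := hconv.slope_mono_adjacent trivial trivial h hz

lemma abel_nonneg (l d : ℕ → ℝ) (n : ℕ) (hn : 1 ≤ n)
    (hl : ∀ i j, i ≤ j → j < n → l j ≤ l i)
    (hS : ∀ q, 1 ≤ q → q ≤ n → 0 ≤ ∑ i ∈ range q, d i) :
    l (n-1) * ∑ i ∈ range n, d i ≤ ∑ i ∈ range n, l i * d i := by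
  induction n with
  | zero => omega
  | succ k ih =>
    rcases Nat.eq_or_lt_of_le hn with h1 | h1
    · simp [← h1]
    · have hk : 1 ≤ k := by omega
      have ihk := ih hk (fun i j hij hj => hl i j hij (by omega))
        (fun q hq1 hq2 => hS q hq1 (by omega))
      have hlk : l k ≤ l (k-1) := hl (k-1) k (by omega) (by omega)
      have hSk : 0 ≤ ∑ i ∈ range k, d i := hS k hk (by omega)
      rw [Finset.sum_range_succ, Finset.sum_range_succ]
      have : l k * (∑ i ∈ range k, d i) ≤ l (k-1) * ∑ i ∈ range k, d i :=
        mul_le_mul_of_nonneg_right hlk hSk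
      simp only [Nat.add_sub_cancel]
      nlinarith

open Finset

lemma filter_sum_eq_range (m q : ℕ) (hq : q ≤ m) (g : Fin m → ℝ) :
    ∑ i ∈ Finset.univ.filter (fun i : Fin m => (i : ℕ) < q), g i =
      ∑ j ∈ Finset.range q, (if h : j < m then g ⟨j, h⟩ else 0) := by
  refine Finset.sum_bij' (fun (i : Fin m) _ => (i : ℕ))
    (fun j hj => (⟨j, lt_of_lt_of_le (Finset.mem_range.mp hj) hq⟩ : Fin m)) ?_ ?_ ?_ ?_ ?_
  · intro i hi
    simp only [Finset.mem_filter] at hi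
    exact Finset.mem_range.mpr hi.2
  · intro j hj
    simp [Finset.mem_range.mp hj, lt_of_lt_of_le (Finset.mem_range.mp hj) hq]
  · intro i hi; rfl
  · intro j hj; rfl
  · intro i hi
    simp [i.isLt]



/-- **Hardy–Littlewood–Pólya / Karamata majorization lemma (weak form).** If `b₁ ≥ ⋯ ≥ b_m` and
`b₁ + ⋯ + b_q ≤ a₁ + ⋯ + a_q` for every `q = 1, …, m`, then for every convex increasing
`ω : ℝ → ℝ` one has `ω(b₁) + ⋯ + ω(b_m) ≤ ω(a₁) + ⋯ + ω(a_m)`. -/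
theorem karamata_weak_majorization (m : ℕ) (a b : Fin m → ℝ)
    (hb : ∀ i j : Fin m, i ≤ j → b j ≤ b i)
    (hab : ∀ q : ℕ, 1 ≤ q → q ≤ m →
      ∑ i ∈ Finset.univ.filter (fun i : Fin m => (i : ℕ) < q), b i ≤
        ∑ i ∈ Finset.univ.filter (fun i : Fin m => (i : ℕ) < q), a i)
    (ω : ℝ → ℝ) (hconv : ConvexOn ℝ Set.univ ω) (hmono : Monotone ω) :
    ∑ i, ω (b i) ≤ ∑ i, ω (a i) := by
  rcases Nat.eq_zero_or_pos m with rfl | hm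
  · simp
  set l : ℕ → ℝ := fun i => if h : i < m then rslope ω (b ⟨i, h⟩) else 0 with hl_def
  set d : ℕ → ℝ := fun i => if h : i < m then a ⟨i, h⟩ - b ⟨i, h⟩ else 0 with hd_def
  have hl_anti : ∀ i j, i ≤ j → j < m → l j ≤ l i := by
    intro i j hij hj
    have hi : i < m := lt_of_le_of_lt hij hj
    simp only [hl_def, dif_pos hi, dif_pos hj]
    exact rslope_mono ω hconv hmono (hb ⟨i, hi⟩ ⟨j, hj⟩ hij)
  have hS : ∀ q, 1 ≤ q → q ≤ m → 0 ≤ ∑ i ∈ Finset.range q, d i := by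
    intro q hq1 hq2
    have h1 := hab q hq1 hq2
    have ha' := filter_sum_eq_range m q hq2 a
    have hb' := filter_sum_eq_range m q hq2 b
    have : ∑ i ∈ Finset.range q, d i =
        (∑ j ∈ Finset.range q, (if h : j < m then a ⟨j, h⟩ else 0)) -
          (∑ j ∈ Finset.range q, (if h : j < m then b ⟨j, h⟩ else 0)) := by
      rw [← Finset.sum_sub_distrib]
      refine Finset.sum_congr rfl fun j hj => ?_
      have hjm : j < m := lt_of_lt_of_le (Finset.mem_range.mp hj) hq2
      simp [hd_def, hjm]
    rw [this, ← ha', ← hb']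
    linarith
  have habel := abel_nonneg l d m hm hl_anti hS
  have hl_nonneg : 0 ≤ l (m - 1) := by
    have h : m - 1 < m := by omega
    simp only [hl_def, dif_pos h]
    exact rslope_nonneg ω hmono _
  have hSm : 0 ≤ ∑ i ∈ Finset.range m, d i := hS m hm le_rfl
  have hkey : 0 ≤ ∑ i ∈ Finset.range m, l i * d i :=
    le_trans (mul_nonneg hl_nonneg hSm) habel
  have hsum : ∑ i ∈ Finset.range m, l i * d i =
      ∑ i : Fin m, rslope ω (b i) * (a i - b i) := by
    rw [← Fin.sum_univ_eq_sum_range (fun i => l i * d i) m]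
    refine Finset.sum_congr rfl fun i _ => ?_
    simp [hl_def, hd_def, i.isLt]
  have hsupp : ∀ i : Fin m, rslope ω (b i) * (a i - b i) ≤ ω (a i) - ω (b i) := by
    intro i
    have := rslope_support ω hconv hmono (b i) (a i)
    linarith
  have : 0 ≤ ∑ i : Fin m, (ω (a i) - ω (b i)) := by
    calc (0:ℝ) ≤ ∑ i ∈ Finset.range m, l i * d i := hkey
      _ = ∑ i : Fin m, rslope ω (b i) * (a i - b i) := hsum
      _ ≤ ∑ i : Fin m, (ω (a i) - ω (b i)) := Finset.sum_le_sum fun i _ => hsupp i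
  rw [Finset.sum_sub_distrib] at this
  linarith
end

section
/- (Lie–Trotter product formula for matrices) Let A and B be N×N complex matrices. Then the sequence (e^{A/n} e^{B/n})^n converges, as n → ∞, to e^{A+B}. -/
open NormedSpace Filter

section Aux

variable {𝔸 : Type*} [NormedRing 𝔸] [NormedAlgebra ℂ 𝔸] [CompleteSpace 𝔸] [NormOneClass 𝔸]

private lemma term_bound (x : 𝔸) (n : ℕ) :
    ‖((n.factorial : ℂ))⁻¹ • x ^ n‖ ≤ ‖x‖ ^ n / n.factorial := by
  rw [norm_smul, norm_inv]
  rw [show ((n.factorial : ℂ)) = ((n.factorial : ℕ) : ℂ) by norm_cast, Complex.norm_natCast]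
  rw [div_eq_inv_mul]
  gcongr
  exact norm_pow_le x n

private lemma real_exp_hasSum (r : ℝ) :
    HasSum (fun n : ℕ => r ^ n / n.factorial) (Real.exp r) := by
  rw [Real.exp_eq_exp_ℝ]
  exact NormedSpace.expSeries_div_hasSum_exp r

private lemma norm_exp_le' (x : 𝔸) : ‖exp x‖ ≤ Real.exp ‖x‖ := by
  have h := NormedSpace.exp_series_hasSum_exp' (𝕂 := ℂ) x
  have hg := real_exp_hasSum ‖x‖
  have hsum : Summable fun n : ℕ => ‖((n.factorial : ℂ))⁻¹ • x ^ n‖ :=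
    Summable.of_nonneg_of_le (fun n => norm_nonneg _) (term_bound x) hg.summable
  calc ‖exp x‖ = ‖∑' n : ℕ, ((n.factorial : ℂ))⁻¹ • x ^ n‖ := by rw [h.tsum_eq]
    _ ≤ ∑' n : ℕ, ‖((n.factorial : ℂ))⁻¹ • x ^ n‖ := norm_tsum_le_tsum_norm hsum
    _ ≤ ∑' n : ℕ, ‖x‖ ^ n / n.factorial :=
        Summable.tsum_le_tsum (term_bound x) hsum hg.summable
    _ = Real.exp ‖x‖ := hg.tsum_eq

private lemma norm_exp_sub_one_sub_id_le (x : 𝔸) :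
    ‖exp x - 1 - x‖ ≤ ‖x‖ ^ 2 * Real.exp ‖x‖ := by
  have h := NormedSpace.exp_series_hasSum_exp' (𝕂 := ℂ) x
  set f : ℕ → 𝔸 := fun n => ((n.factorial : ℂ))⁻¹ • x ^ n with hf
  have hsum2 : ∑ i ∈ Finset.range 2, f i = 1 + x := by
    simp [hf, Finset.sum_range_succ, Nat.factorial]
  have h2 : HasSum (fun n => f (n + 2)) (exp x - (1 + x)) := by
    rw [← hsum2]
    exact (hasSum_nat_add_iff' 2).mpr h
  have hbound : ∀ n : ℕ, ‖f (n + 2)‖ ≤ ‖x‖ ^ 2 * (‖x‖ ^ n / n.factorial) := by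
    intro n
    refine (term_bound x (n + 2)).trans ?_
    have h1 : (n.factorial : ℝ) ≤ ((n + 2).factorial : ℝ) := by
      exact_mod_cast Nat.factorial_le (by omega)
    have h2 : (0 : ℝ) < n.factorial := by positivity
    calc ‖x‖ ^ (n + 2) / ((n + 2).factorial : ℝ) ≤ ‖x‖ ^ (n + 2) / (n.factorial : ℝ) :=
          div_le_div_of_nonneg_left (by positivity) h2 h1
      _ = ‖x‖ ^ 2 * (‖x‖ ^ n / n.factorial) := by rw [pow_add]; ring
  have hg : HasSum (fun n : ℕ => ‖x‖ ^ 2 * (‖x‖ ^ n / n.factorial)) (‖x‖ ^ 2 * Real.exp ‖x‖) :=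
    (real_exp_hasSum ‖x‖).mul_left _
  have hsum : Summable fun n : ℕ => ‖f (n + 2)‖ :=
    Summable.of_nonneg_of_le (fun n => norm_nonneg _) hbound hg.summable
  calc ‖exp x - 1 - x‖ = ‖∑' n : ℕ, f (n + 2)‖ := by rw [h2.tsum_eq, sub_sub]
    _ ≤ ∑' n : ℕ, ‖f (n + 2)‖ := norm_tsum_le_tsum_norm hsum
    _ ≤ ∑' n : ℕ, ‖x‖ ^ 2 * (‖x‖ ^ n / n.factorial) :=
        Summable.tsum_le_tsum hbound hsum hg.summable
    _ = ‖x‖ ^ 2 * Real.exp ‖x‖ := hg.tsum_eq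

private lemma exp_mul_sub_exp_add_norm_le (x y : 𝔸) :
    ‖exp x * exp y - exp (x + y)‖ ≤
      (‖x‖ + ‖y‖) ^ 2 * ((4 + ‖x‖) * Real.exp (‖x‖ + ‖y‖)) := by
  set p := ‖x‖
  set q := ‖y‖
  have hp : 0 ≤ p := norm_nonneg _
  have hq : 0 ≤ q := norm_nonneg _
  have hid : exp x * exp y - exp (x + y) =
      (exp x - 1 - x) * exp y + x * (exp y - 1 - y) + (exp y - 1 - y)
        + x * y - (exp (x + y) - 1 - (x + y)) := by noncomm_ring
  have e1 : ‖(exp x - 1 - x) * exp y‖ ≤ p ^ 2 * Real.exp p * Real.exp q :=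
    (norm_mul_le _ _).trans
      (mul_le_mul (norm_exp_sub_one_sub_id_le x) (norm_exp_le' y) (norm_nonneg _)
        (by positivity))
  have e2 : ‖x * (exp y - 1 - y)‖ ≤ p * (q ^ 2 * Real.exp q) :=
    (norm_mul_le _ _).trans
      (mul_le_mul_of_nonneg_left (norm_exp_sub_one_sub_id_le y) hp)
  have e3 : ‖exp y - 1 - y‖ ≤ q ^ 2 * Real.exp q := norm_exp_sub_one_sub_id_le y
  have e4 : ‖x * y‖ ≤ p * q := norm_mul_le _ _
  have e5 : ‖exp (x + y) - 1 - (x + y)‖ ≤ (p + q) ^ 2 * Real.exp (p + q) := by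
    refine (norm_exp_sub_one_sub_id_le (x + y)).trans ?_
    have hxy : ‖x + y‖ ≤ p + q := norm_add_le _ _
    gcongr <;> first | exact hxy | positivity
  have expp : Real.exp p ≤ Real.exp (p + q) := Real.exp_le_exp.mpr (by linarith)
  have expq : Real.exp q ≤ Real.exp (p + q) := Real.exp_le_exp.mpr (by linarith)
  have h1 : (1 : ℝ) ≤ Real.exp (p + q) := Real.one_le_exp (by linarith)
  calc ‖exp x * exp y - exp (x + y)‖
      ≤ ‖(exp x - 1 - x) * exp y‖ + ‖x * (exp y - 1 - y)‖ + ‖exp y - 1 - y‖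
        + ‖x * y‖ + ‖exp (x + y) - 1 - (x + y)‖ := by
        rw [hid]
        refine (norm_sub_le _ _).trans ?_
        gcongr
        refine (norm_add_le _ _).trans ?_
        gcongr
        refine (norm_add_le _ _).trans ?_
        gcongr
        exact norm_add_le _ _
    _ ≤ p ^ 2 * Real.exp p * Real.exp q + p * (q ^ 2 * Real.exp q) + q ^ 2 * Real.exp q
        + p * q + (p + q) ^ 2 * Real.exp (p + q) := by
        gcongr
    _ ≤ (p + q) ^ 2 * ((4 + p) * Real.exp (p + q)) := by
        have b1 : p ^ 2 * Real.exp p * Real.exp q = p ^ 2 * Real.exp (p + q) := by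
          rw [mul_assoc, ← Real.exp_add]
        rw [b1]
        have h2 : p ^ 2 ≤ (p + q) ^ 2 := by nlinarith
        have h3 : q ^ 2 ≤ (p + q) ^ 2 := by nlinarith
        have h4 : p * q ≤ (p + q) ^ 2 := by nlinarith
        have h5 : p ^ 2 * Real.exp (p + q) ≤ (p + q) ^ 2 * Real.exp (p + q) := by
          gcongr
        have h6 : p * (q ^ 2 * Real.exp q) ≤ p * ((p + q) ^ 2 * Real.exp (p + q)) := by
          gcongr
        have h7 : q ^ 2 * Real.exp q ≤ (p + q) ^ 2 * Real.exp (p + q) := by gcongr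
        have h8 : p * q ≤ (p + q) ^ 2 * Real.exp (p + q) := by nlinarith
        nlinarith [Real.exp_pos (p + q), sq_nonneg (p + q)]

private lemma pow_sub_pow_norm_le (T S : 𝔸) {M : ℝ} (hT : ‖T‖ ≤ M) (hS : ‖S‖ ≤ M)
    (hM : 1 ≤ M) (n : ℕ) : ‖T ^ n - S ^ n‖ ≤ n * M ^ n * ‖T - S‖ := by
  have hM0 : 0 ≤ M := le_trans zero_le_one hM
  induction n with
  | zero => simp
  | succ n ih =>
    have key : T ^ (n + 1) - S ^ (n + 1) = T ^ n * (T - S) + (T ^ n - S ^ n) * S := by noncomm_ring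
    calc ‖T ^ (n + 1) - S ^ (n + 1)‖
        ≤ ‖T ^ n * (T - S)‖ + ‖(T ^ n - S ^ n) * S‖ := by rw [key]; exact norm_add_le _ _
      _ ≤ M ^ n * ‖T - S‖ + (n * M ^ n * ‖T - S‖) * M := by
          gcongr
          · exact (norm_mul_le _ _).trans (by
              gcongr
              exact (norm_pow_le T n).trans (by gcongr))
          · exact (norm_mul_le _ _).trans (by gcongr)
      _ ≤ (n + 1 : ℕ) * M ^ (n + 1) * ‖T - S‖ := by
          have h2 : (0:ℝ) ≤ ‖T - S‖ := norm_nonneg _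
          have hPd : (0:ℝ) ≤ M ^ n * ‖T - S‖ := by positivity
          rw [pow_succ]
          push_cast
          nlinarith [mul_nonneg hPd (sub_nonneg.mpr hM)]

theorem trotter_aux (A B : 𝔸) :
    Tendsto (fun n : ℕ => (exp ((n : ℂ)⁻¹ • A) * exp ((n : ℂ)⁻¹ • B)) ^ n)
      atTop (nhds (exp (A + B))) := by
  set a := ‖A‖
  set b := ‖B‖
  set c := a + b with hc
  have ha : 0 ≤ a := norm_nonneg _
  have hb : 0 ≤ b := norm_nonneg _
  set C : ℝ := Real.exp c * (c ^ 2 * ((4 + a) * Real.exp c)) with hC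
  rw [tendsto_iff_norm_sub_tendsto_zero]
  refine squeeze_zero' (Eventually.of_forall fun n => norm_nonneg _) ?_
    (tendsto_const_div_atTop_nhds_zero_nat C)
  filter_upwards [eventually_ge_atTop 1] with n hn
  have hn0 : (n : ℝ) ≠ 0 := Nat.cast_ne_zero.mpr (by omega)
  have hn1 : (1 : ℝ) ≤ (n : ℝ) := by exact_mod_cast hn
  have hninv : (0 : ℝ) ≤ (n : ℝ)⁻¹ := by positivity
  have hninv1 : (n : ℝ)⁻¹ ≤ 1 := by
    rw [inv_le_one_iff₀]; right; exact hn1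
  set x : 𝔸 := (n : ℂ)⁻¹ • A
  set y : 𝔸 := (n : ℂ)⁻¹ • B
  have hxn : ‖x‖ = (n : ℝ)⁻¹ * a := by
    rw [norm_smul, norm_inv, Complex.norm_natCast]
  have hyn : ‖y‖ = (n : ℝ)⁻¹ * b := by
    rw [norm_smul, norm_inv, Complex.norm_natCast]
  -- the exact limit written as an n-th power
  have hS : exp (x + y) ^ n = exp (A + B) := by
    letI : NormedAlgebra ℚ 𝔸 := NormedAlgebra.restrictScalars ℚ ℂ 𝔸
    rw [← NormedSpace.exp_nsmul]
    congr 1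
    rw [← smul_add, ← Nat.cast_smul_eq_nsmul ℂ, smul_smul,
      mul_inv_cancel₀ (Nat.cast_ne_zero.mpr (show n ≠ 0 by omega)), one_smul]
  rw [← hS]
  -- norm bounds
  set M : ℝ := Real.exp ((n : ℝ)⁻¹ * c) with hM
  have hM1 : 1 ≤ M := Real.one_le_exp (by positivity)
  have hT : ‖exp x * exp y‖ ≤ M := by
    refine (norm_mul_le _ _).trans ?_
    calc ‖exp x‖ * ‖exp y‖ ≤ Real.exp ‖x‖ * Real.exp ‖y‖ :=
          mul_le_mul (norm_exp_le' x) (norm_exp_le' y) (norm_nonneg _) (Real.exp_pos _).le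
      _ = M := by rw [← Real.exp_add, hxn, hyn, hM, hc]; ring_nf
  have hSnorm : ‖exp (x + y)‖ ≤ M := by
    refine (norm_exp_le' (x + y)).trans ?_
    apply Real.exp_le_exp.mpr
    calc ‖x + y‖ ≤ ‖x‖ + ‖y‖ := norm_add_le _ _
      _ = (n : ℝ)⁻¹ * c := by rw [hxn, hyn, hc]; ring
  have hMn : M ^ n = Real.exp c := by
    rw [hM, ← Real.exp_nat_mul, ← mul_assoc, mul_inv_cancel₀ hn0, one_mul]
  have hdiff : ‖exp x * exp y - exp (x + y)‖ ≤
      ((n : ℝ)⁻¹) ^ 2 * (c ^ 2 * ((4 + a) * Real.exp c)) := by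
    refine (exp_mul_sub_exp_add_norm_le x y).trans ?_
    have hxy : ‖x‖ + ‖y‖ = (n : ℝ)⁻¹ * c := by rw [hxn, hyn, hc]; ring
    rw [hxy, mul_pow]
    have hexp : Real.exp ((n : ℝ)⁻¹ * c) ≤ Real.exp c :=
      Real.exp_le_exp.mpr (mul_le_of_le_one_left (by positivity) hninv1)
    have hxa : ‖x‖ ≤ a := by
      rw [hxn]; exact mul_le_of_le_one_left ha hninv1
    rw [mul_assoc]
    gcongr
  calc ‖(exp x * exp y) ^ n - exp (x + y) ^ n‖
      ≤ n * M ^ n * ‖exp x * exp y - exp (x + y)‖ :=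
        pow_sub_pow_norm_le _ _ hT hSnorm hM1 n
    _ ≤ n * Real.exp c * (((n : ℝ)⁻¹) ^ 2 * (c ^ 2 * ((4 + a) * Real.exp c))) := by
        rw [hMn]
        gcongr
    _ ≤ C / n := by
        rw [hC]
        rw [div_eq_mul_inv]
        have : (n : ℝ) * Real.exp c * (((n : ℝ)⁻¹) ^ 2 * (c ^ 2 * ((4 + a) * Real.exp c)))
            = Real.exp c * (c ^ 2 * ((4 + a) * Real.exp c)) * (n : ℝ)⁻¹ := by
          field_simp
        rw [this]

end Aux

/-- **The Lie–Trotter product formula for matrices.** For `N × N` complex matrices `A` and `B`,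
`(e^{A/n} e^{B/n})^n → e^{A+B}` as `n → ∞`. -/
theorem lie_trotter (N : ℕ) (A B : Matrix (Fin N) (Fin N) ℂ) :
    Filter.Tendsto
      (fun n : ℕ =>
        (NormedSpace.exp ((n : ℂ)⁻¹ • A) * NormedSpace.exp ((n : ℂ)⁻¹ • B)) ^ n)
      Filter.atTop (nhds (NormedSpace.exp (A + B))) := by
  rcases Nat.eq_zero_or_pos N with hN | hN
  · subst hN
    have h : ∀ X Y : Matrix (Fin 0) (Fin 0) ℂ, X = Y := fun X Y => Matrix.ext fun i _ => i.elim0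
    have heq : (fun n : ℕ =>
        (NormedSpace.exp ((n : ℂ)⁻¹ • A) * NormedSpace.exp ((n : ℂ)⁻¹ • B)) ^ n)
        = fun _ => NormedSpace.exp (A + B) := funext fun n => h _ _
    rw [heq]
    exact tendsto_const_nhds
  · haveI : Nonempty (Fin N) := Fin.pos_iff_nonempty.mp hN
    letI : SeminormedRing (Matrix (Fin N) (Fin N) ℂ) := Matrix.linftyOpSemiNormedRing
    letI : NormedRing (Matrix (Fin N) (Fin N) ℂ) := Matrix.linftyOpNormedRing
    letI : NormedAlgebra ℂ (Matrix (Fin N) (Fin N) ℂ) := Matrix.linftyOpNormedAlgebra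
    haveI : NormOneClass (Matrix (Fin N) (Fin N) ℂ) := Matrix.linfty_opNormOneClass
    exact trotter_aux A B
end

section
/- (Segal) Let A and B be N×N complex Hermitian matrices. Then ‖e^{A+B}‖ ≤ ‖e^A e^B‖, where ‖·‖ denotes the ℓ²→ℓ² operator norm on N×N complex matrices. -/
open scoped Matrix.Norms.L2Operator

open NormedSpace Finset Nat Filter

variable {𝔸 : Type*} [NormedRing 𝔸] [NormedAlgebra ℂ 𝔸] [CompleteSpace 𝔸] [NormOneClass 𝔸]

lemma exp_tail_norm_le (X : 𝔸) (k : ℕ) :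
    ‖exp X - ∑ i ∈ range k, (i ! : ℂ)⁻¹ • X ^ i‖ ≤
      Real.exp ‖X‖ - ∑ i ∈ range k, ‖X‖ ^ i / i ! := by
  have hs : Summable fun n : ℕ => (n ! : ℂ)⁻¹ • X ^ n := expSeries_summable' (𝕂 := ℂ) X
  have hsr : Summable fun n : ℕ => ‖X‖ ^ n / n ! := Real.summable_pow_div_factorial ‖X‖
  have hdiff : exp X - ∑ i ∈ range k, (i ! : ℂ)⁻¹ • X ^ i
      = ∑' i : ℕ, ((i + k)! : ℂ)⁻¹ • X ^ (i + k) := by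
    rw [exp_eq_tsum ℂ]
    simp only []
    rw [sub_eq_iff_eq_add]
    exact (Summable.sum_add_tsum_nat_add k hs).symm.trans (add_comm _ _)
  have hdiffr : Real.exp ‖X‖ - ∑ i ∈ range k, ‖X‖ ^ i / i !
      = ∑' i : ℕ, ‖X‖ ^ (i + k) / (i + k)! := by
    rw [Real.exp_eq_exp_ℝ, exp_eq_tsum_div]
    simp only []
    rw [sub_eq_iff_eq_add]
    exact (Summable.sum_add_tsum_nat_add k hsr).symm.trans (add_comm _ _)
  rw [hdiff, hdiffr]
  refine tsum_of_norm_bounded ((summable_nat_add_iff k).2 hsr).hasSum fun i => ?_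
  rw [norm_smul, norm_inv, Complex.norm_natCast]
  calc ((i + k)! : ℝ)⁻¹ * ‖X ^ (i + k)‖ ≤ ((i + k)! : ℝ)⁻¹ * ‖X‖ ^ (i + k) := by
        gcongr
        exact norm_pow_le X (i + k)
    _ = ‖X‖ ^ (i + k) / (i + k)! := by ring

lemma norm_exp_le_exp_norm' (X : 𝔸) : ‖exp X‖ ≤ Real.exp ‖X‖ := by
  simpa using exp_tail_norm_le X 0

lemma norm_exp_sub_one_le' (X : 𝔸) : ‖exp X - 1‖ ≤ Real.exp ‖X‖ - 1 := by
  simpa using exp_tail_norm_le X 1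

lemma norm_exp_sub_one_sub_le' (X : 𝔸) : ‖exp X - 1 - X‖ ≤ Real.exp ‖X‖ - 1 - ‖X‖ := by
  have h := exp_tail_norm_le X 2
  simp only [Finset.sum_range_succ, Finset.sum_range_one] at h
  simpa [sub_sub] using h

lemma real_exp_quad {t : ℝ} (h0 : 0 ≤ t) (h1 : t ≤ 1) : Real.exp t ≤ 1 + t + t ^ 2 := by
  have h := Real.exp_bound (x := t) (by rw [abs_of_nonneg h0]; exact h1) (n := 2) (by norm_num)
  simp only [Finset.sum_range_succ, Finset.sum_range_zero] at h
  rw [abs_of_nonneg h0] at h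
  have h2 := abs_le.mp h
  norm_num at h2
  nlinarith [h2.2]

lemma real_g_mono {s t : ℝ} (hs : 0 ≤ s) (hst : s ≤ t) :
    Real.exp s - 1 - s ≤ Real.exp t - 1 - t := by
  have h1 := Real.add_one_le_exp (t - s)
  have h2 := Real.one_le_exp hs
  have h3 := Real.exp_add s (t - s)
  rw [add_sub_cancel] at h3
  nlinarith

lemma key_est {X Y : 𝔸} (h : ‖X‖ + ‖Y‖ ≤ 1) :
    ‖exp X * exp Y - exp (X + Y)‖ ≤ 4 * (‖X‖ + ‖Y‖) ^ 2 := by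
  have hx : (0:ℝ) ≤ ‖X‖ := norm_nonneg _
  have hy : (0:ℝ) ≤ ‖Y‖ := norm_nonneg _
  have hy1 : ‖Y‖ ≤ 1 := by linarith
  have hid : exp X * exp Y - exp (X + Y) =
      (exp X - 1 - X) * exp Y + X * (exp Y - 1) + (exp Y - 1 - Y)
        - (exp (X + Y) - 1 - (X + Y)) := by noncomm_ring
  have b1 : ‖(exp X - 1 - X) * exp Y‖ ≤ ‖X‖ ^ 2 * 3 := by
    calc ‖(exp X - 1 - X) * exp Y‖ ≤ ‖exp X - 1 - X‖ * ‖exp Y‖ := norm_mul_le _ _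
      _ ≤ ‖X‖ ^ 2 * 3 := by
          have e1 : ‖exp X - 1 - X‖ ≤ ‖X‖ ^ 2 := by
            have := norm_exp_sub_one_sub_le' X
            have := real_exp_quad hx (by linarith)
            nlinarith
          have e2 : ‖exp Y‖ ≤ 3 := by
            have := norm_exp_le_exp_norm' Y
            have := real_exp_quad hy hy1
            nlinarith
          exact mul_le_mul e1 e2 (norm_nonneg _) (by positivity)
  have b2 : ‖X * (exp Y - 1)‖ ≤ ‖X‖ * (‖Y‖ + ‖Y‖ ^ 2) := by
    calc ‖X * (exp Y - 1)‖ ≤ ‖X‖ * ‖exp Y - 1‖ := norm_mul_le _ _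
      _ ≤ _ := by
          have := norm_exp_sub_one_le' Y
          have := real_exp_quad hy hy1
          have : ‖exp Y - 1‖ ≤ ‖Y‖ + ‖Y‖ ^ 2 := by nlinarith
          exact mul_le_mul_of_nonneg_left this hx
  have b3 : ‖exp Y - 1 - Y‖ ≤ ‖Y‖ ^ 2 := by
    have := norm_exp_sub_one_sub_le' Y
    have := real_exp_quad hy hy1
    nlinarith
  have b4 : ‖exp (X + Y) - 1 - (X + Y)‖ ≤ (‖X‖ + ‖Y‖) ^ 2 := by
    have h1 := norm_exp_sub_one_sub_le' (X + Y)
    have h2 := real_g_mono (norm_nonneg (X + Y)) (norm_add_le X Y)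
    have h3 := real_exp_quad (by positivity : (0:ℝ) ≤ ‖X‖ + ‖Y‖) h
    nlinarith
  calc ‖exp X * exp Y - exp (X + Y)‖
      ≤ ‖(exp X - 1 - X) * exp Y + X * (exp Y - 1) + (exp Y - 1 - Y)‖
        + ‖exp (X + Y) - 1 - (X + Y)‖ := by rw [hid]; exact norm_sub_le _ _
    _ ≤ ‖(exp X - 1 - X) * exp Y‖ + ‖X * (exp Y - 1)‖ + ‖exp Y - 1 - Y‖
        + ‖exp (X + Y) - 1 - (X + Y)‖ := by
          gcongr
          exact norm_add₃_le
    _ ≤ 4 * (‖X‖ + ‖Y‖) ^ 2 := by nlinarith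


section cstar
variable {A : Type*} [CStarAlgebra A] [Nontrivial A]

lemma sq_norm_exp_mul_exp_le {a b : A} (ha : IsSelfAdjoint a) (hb : IsSelfAdjoint b) :
    ‖exp a * exp b‖ ^ 2 ≤ ‖exp (a + a) * exp (b + b)‖ := by
  let +nondep : NormedAlgebra ℚ A := .restrictScalars ℚ ℂ A
  have hea : IsSelfAdjoint (exp a) := ha.exp
  have heb : IsSelfAdjoint (exp b) := hb.exp
  set M := exp a * exp b with hM
  set d := exp (a + a) * exp (b + b) with hd
  have haa : exp (a + a) = exp a * exp a := exp_add_of_commute (Commute.refl a)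
  have hbb : exp (b + b) = exp b * exp b := exp_add_of_commute (Commute.refl b)
  have hc : star M * M = exp b * exp (a + a) * exp b := by
    rw [hM, star_mul, hea.star_eq, heb.star_eq, haa]
    simp only [mul_assoc]
  have hsq : ‖M‖ ^ 2 = ‖exp b * exp (a + a) * exp b‖ := by
    rw [← hc, CStarRing.norm_star_mul_self, sq]
  have hcsa : IsSelfAdjoint (exp b * exp (a + a) * exp b) := by
    rw [← hc]; exact IsSelfAdjoint.star_mul_self M
  -- conjugation
  have e1 : exp b * exp (-b) = 1 := by
    rw [← exp_add_of_commute (Commute.refl b).neg_right]; simp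
  have e2 : exp (-b) * exp b = 1 := by
    rw [← exp_add_of_commute (Commute.refl b).neg_left]; simp
  set u : Aˣ := ⟨exp b, exp (-b), e1, e2⟩ with hu
  have h2 : exp (b + b) * exp (-b) = exp b := by
    rw [← exp_add_of_commute (((Commute.refl b).add_left (Commute.refl b)).neg_right)]
    congr 1; abel
  have hconj : (u : A) * d * ((u⁻¹ : Aˣ) : A) = exp b * exp (a + a) * exp b := by
    show exp b * d * exp (-b) = _
    rw [hd]
    simp only [mul_assoc, h2]
  have hspec : spectrum ℂ (exp b * exp (a + a) * exp b) = spectrum ℂ d := by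
    rw [← hconj]; exact spectrum.units_conjugate
  have hrad : spectralRadius ℂ (exp b * exp (a + a) * exp b) = spectralRadius ℂ d := by
    unfold spectralRadius; rw [hspec]
  have hle : (‖exp b * exp (a + a) * exp b‖₊ : ENNReal) ≤ (‖d‖₊ : ENNReal) := by
    rw [← hcsa.spectralRadius_eq_nnnorm, hrad]
    exact spectrum.spectralRadius_le_nnnorm (𝕜 := ℂ) d
  have hle' : ‖exp b * exp (a + a) * exp b‖ ≤ ‖d‖ := by
    have := ENNReal.coe_le_coe.mp hle
    exact_mod_cast this
  rw [hsq]; exact hle'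

lemma iter_norm_exp {a b : A} (ha : IsSelfAdjoint a) (hb : IsSelfAdjoint b) (k : ℕ) :
    ‖exp a * exp b‖ ^ 2 ^ k ≤ ‖exp ((2 ^ k : ℕ) • a) * exp ((2 ^ k : ℕ) • b)‖ := by
  induction k generalizing a b with
  | zero => simp
  | succ k ih =>
    have h1 := sq_norm_exp_mul_exp_le ha hb
    have h2 := ih (ha.add ha) (hb.add hb)
    have hsm : ∀ v : A, (2 ^ k : ℕ) • (v + v) = (2 ^ (k + 1) : ℕ) • v := by
      intro v
      rw [smul_add, ← add_nsmul]
      congr 1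
      ring
    calc ‖exp a * exp b‖ ^ 2 ^ (k + 1)
        = (‖exp a * exp b‖ ^ 2) ^ 2 ^ k := by
          rw [← pow_mul, pow_succ, mul_comm]
      _ ≤ ‖exp (a + a) * exp (b + b)‖ ^ 2 ^ k :=
          pow_le_pow_left₀ (by positivity) h1 _
      _ ≤ ‖exp ((2 ^ k : ℕ) • (a + a)) * exp ((2 ^ k : ℕ) • (b + b))‖ := h2
      _ = _ := by rw [hsm a, hsm b]
end cstar

section absseg
variable {A : Type*} [CStarAlgebra A] [Nontrivial A]

theorem abstract_segal {a b : A} (ha : IsSelfAdjoint a) (hb : IsSelfAdjoint b) :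
    ‖exp (a + b)‖ ≤ ‖exp a * exp b‖ := by
  let +nondep : NormedAlgebra ℚ A := .restrictScalars ℚ ℂ A
  set R := ‖exp a * exp b‖ with hR
  set a₀ := ‖a‖ + ‖b‖ with ha₀def
  have ha₀0 : 0 ≤ a₀ := by rw [ha₀def]; positivity
  set C := 4 * a₀ ^ 2 * Real.exp a₀ with hC
  have key : ∀ k : ℕ, a₀ * ((2:ℝ) ^ k)⁻¹ ≤ 1 →
      ‖exp (a + b)‖ ≤ R * Real.exp (C * ((2:ℝ) ^ k)⁻¹) := by
    intro k hk
    set p : ℝ := ((2:ℝ) ^ k)⁻¹ with hp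
    have hp0 : 0 < p := by rw [hp]; positivity
    have hp1 : p ≤ 1 := by
      rw [hp]
      exact inv_le_one_of_one_le₀ (one_le_pow₀ (by norm_num))
    have hpinv : (2:ℝ) ^ k * p = 1 := by
      rw [hp]; field_simp
    set c : ℂ := ((2:ℂ) ^ k)⁻¹ with hc
    have hcs : IsSelfAdjoint c := by
      simp only [hc, IsSelfAdjoint, star_inv₀, star_pow, Complex.star_def, map_ofNat]
    have hnc : ‖c‖ = p := by
      rw [hc, hp, norm_inv, norm_pow]
      norm_num
    set X := c • a with hX
    set Y := c • b with hY
    have hXsa : IsSelfAdjoint X := hcs.smul ha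
    have hYsa : IsSelfAdjoint Y := hcs.smul hb
    have hgen : ∀ v : A, (2 ^ k : ℕ) • (c • v) = v := by
      intro v
      rw [← Nat.cast_smul_eq_nsmul ℂ, smul_smul, hc]
      push_cast
      rw [mul_inv_cancel₀ (pow_ne_zero _ two_ne_zero), one_smul]
    have hexpa : exp a = exp X ^ 2 ^ k := by
      conv_lhs => rw [← hgen a, ← hX]
      rw [exp_nsmul]
    have hexpb : exp b = exp Y ^ 2 ^ k := by
      conv_lhs => rw [← hgen b, ← hY]
      rw [exp_nsmul]
    have hXY : X + Y = c • (a + b) := by rw [hX, hY, smul_add]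
    have hexpab : exp (a + b) = exp (X + Y) ^ 2 ^ k := by
      conv_lhs => rw [← hgen (a + b), ← hXY]
      rw [exp_nsmul]
    have hx : ‖X‖ = p * ‖a‖ := by rw [hX, norm_smul, hnc]
    have hy : ‖Y‖ = p * ‖b‖ := by rw [hY, norm_smul, hnc]
    have hxy : ‖X‖ + ‖Y‖ = p * a₀ := by rw [hx, hy, ha₀def]; ring
    have hxy1 : ‖X‖ + ‖Y‖ ≤ 1 := by rw [hxy, mul_comm]; exact hk
    -- self-adjoint power identity
    have husa : IsSelfAdjoint (exp (X + Y)) := (hXsa.add hYsa).exp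
    have hnorm1 : ‖exp (a + b)‖ = ‖exp (X + Y)‖ ^ 2 ^ k := by
      rw [hexpab, ← coe_nnnorm, husa.nnnorm_pow_two_pow, NNReal.coe_pow, coe_nnnorm]
    set d := ‖exp X * exp Y‖ with hd
    set ε := ‖exp X * exp Y - exp (X + Y)‖ with hε
    have hε0 : 0 ≤ ε := norm_nonneg _
    have h3 : ‖exp (X + Y)‖ ≤ d + ε := by
      have h := norm_sub_norm_le (exp (X + Y)) (exp X * exp Y)
      rw [norm_sub_rev] at h
      rw [hd, hε]; linarith
    -- lower bound on d
    have e1 : exp Y * exp (-Y) = 1 := by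
      rw [← exp_add_of_commute (Commute.refl Y).neg_right]; simp
    have e2 : exp X * exp (-X) = 1 := by
      rw [← exp_add_of_commute (Commute.refl X).neg_right]; simp
    have hinv : (exp X * exp Y) * (exp (-Y) * exp (-X)) = 1 := by
      rw [mul_assoc, ← mul_assoc (exp Y), e1, one_mul, e2]
    have hone : (1:ℝ) ≤ d * (Real.exp ‖Y‖ * Real.exp ‖X‖) := by
      have h1 : (1:ℝ) = ‖(1 : A)‖ := norm_one.symm
      calc (1:ℝ) = ‖(exp X * exp Y) * (exp (-Y) * exp (-X))‖ := by rw [hinv, norm_one]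
        _ ≤ ‖exp X * exp Y‖ * ‖exp (-Y) * exp (-X)‖ := norm_mul_le _ _
        _ ≤ d * (Real.exp ‖Y‖ * Real.exp ‖X‖) := by
            rw [← hd]
            gcongr
            calc ‖exp (-Y) * exp (-X)‖ ≤ ‖exp (-Y)‖ * ‖exp (-X)‖ := norm_mul_le _ _
              _ ≤ Real.exp ‖Y‖ * Real.exp ‖X‖ := by
                  have u1 := norm_exp_le_exp_norm' (-Y)
                  have u2 := norm_exp_le_exp_norm' (-X)
                  rw [norm_neg] at u1 u2
                  exact mul_le_mul u1 u2 (norm_nonneg _) (Real.exp_pos _).le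
    have hdlow' : (1:ℝ) ≤ d * Real.exp (‖X‖ + ‖Y‖) := by
      have hexp : Real.exp ‖Y‖ * Real.exp ‖X‖ = Real.exp (‖X‖ + ‖Y‖) := by
        rw [← Real.exp_add, add_comm]
      rw [← hexp]; exact hone
    have hd0 : 0 ≤ d := norm_nonneg _
    have hεb : ε ≤ 4 * (‖X‖ + ‖Y‖) ^ 2 := key_est hxy1
    have hgena : (2 ^ k : ℕ) • X = a := by rw [hX]; exact hgen a
    have hgenb : (2 ^ k : ℕ) • Y = b := by rw [hY]; exact hgen b
    have hiter : d ^ 2 ^ k ≤ R := by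
      have h := iter_norm_exp hXsa hYsa k
      rwa [hgena, hgenb] at h

    set E := Real.exp (‖X‖ + ‖Y‖) with hE
    have hstep : d + ε ≤ d * (1 + ε * E) := by
      have hE0 : 0 < E := Real.exp_pos _
      nlinarith
    have hq0 : 0 ≤ ε * E := by positivity
    calc ‖exp (a + b)‖ = ‖exp (X + Y)‖ ^ 2 ^ k := hnorm1
      _ ≤ (d + ε) ^ 2 ^ k := pow_le_pow_left₀ (norm_nonneg _) h3 _
      _ ≤ (d * (1 + ε * E)) ^ 2 ^ k := pow_le_pow_left₀ (by positivity) hstep _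
      _ = d ^ 2 ^ k * (1 + ε * E) ^ 2 ^ k := mul_pow _ _ _
      _ ≤ R * Real.exp (ε * E) ^ 2 ^ k := by
          have h1 : (1 + ε * E) ^ 2 ^ k ≤ Real.exp (ε * E) ^ 2 ^ k :=
            pow_le_pow_left₀ (by positivity) (by linarith [Real.add_one_le_exp (ε * E)]) _
          exact mul_le_mul hiter h1 (by positivity) (le_trans (pow_nonneg hd0 _) hiter)
      _ = R * Real.exp ((2 ^ k : ℝ) * (ε * E)) := by
          rw [← Real.exp_nat_mul]
          norm_cast
      _ ≤ R * Real.exp (C * p) := by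
          have hRnn : 0 ≤ R := norm_nonneg _
          have harg : (2 ^ k : ℝ) * (ε * E) ≤ C * p := by
            have hEb : E ≤ Real.exp a₀ := by
              rw [hE]
              apply Real.exp_le_exp.mpr
              rw [hxy]
              nlinarith
            have hεb2 : ε ≤ 4 * (p * a₀) ^ 2 := by rw [← hxy]; exact hεb
            have step : (2 ^ k : ℝ) * (ε * E) ≤ (2 ^ k : ℝ) * ((4 * (p * a₀) ^ 2) * Real.exp a₀) := by
              have hEpos := Real.exp_pos a₀
              gcongr
            refine le_trans step (le_of_eq ?_)
            rw [hC]
            linear_combination (4 * p * a₀ ^ 2 * Real.exp a₀) * hpinv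
          exact mul_le_mul_of_nonneg_left (Real.exp_le_exp.mpr harg) hRnn
  -- limit
  have h2 : Tendsto (fun k : ℕ => ((2:ℝ)⁻¹) ^ k) atTop (nhds 0) :=
    tendsto_pow_atTop_nhds_zero_of_lt_one (by norm_num) (by norm_num)
  have h0 : Tendsto (fun k : ℕ => ((2:ℝ) ^ k)⁻¹) atTop (nhds 0) := by
    simpa [inv_pow] using h2
  have htend : Tendsto (fun k : ℕ => R * Real.exp (C * ((2:ℝ) ^ k)⁻¹)) atTop (nhds R) := by
    have h1 : Tendsto (fun k : ℕ => C * ((2:ℝ) ^ k)⁻¹) atTop (nhds 0) := by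
      simpa using h0.const_mul C
    have h3 : Tendsto (fun k : ℕ => Real.exp (C * ((2:ℝ) ^ k)⁻¹)) atTop (nhds 1) := by
      simpa [Function.comp_def] using (Real.continuous_exp.tendsto 0).comp h1
    simpa using h3.const_mul R
  have hev : ∀ᶠ k : ℕ in atTop, ‖exp (a + b)‖ ≤ R * Real.exp (C * ((2:ℝ) ^ k)⁻¹) := by
    have h4 : Tendsto (fun k : ℕ => a₀ * ((2:ℝ) ^ k)⁻¹) atTop (nhds 0) := by
      simpa using h0.const_mul a₀
    filter_upwards [h4.eventually_le_const one_pos] with k hk using key k hk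
  exact ge_of_tendsto htend hev

end absseg

open scoped Matrix.Norms.L2Operator

noncomputable instance segalInstCStarAlgebra (N : ℕ) :
    CStarAlgebra (Matrix (Fin N) (Fin N) ℂ) := { }

/-- **Segal's inequality.** For `N × N` complex Hermitian matrices `A` and `B`,
`‖e^{A+B}‖ ≤ ‖e^A e^B‖` in the `ℓ² → ℓ²` operator norm. -/
theorem segal_inequality (N : ℕ) (A B : Matrix (Fin N) (Fin N) ℂ)
    (hA : A.IsHermitian) (hB : B.IsHermitian) :
    ‖NormedSpace.exp (A + B)‖ ≤ ‖NormedSpace.exp A * NormedSpace.exp B‖ := by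
  rcases Nat.eq_zero_or_pos N with hN | hN
  · have hsub : Subsingleton (Matrix (Fin N) (Fin N) ℂ) :=
      ⟨fun M M' => by subst hN; ext i j; exact isEmptyElim i⟩
    rw [Subsingleton.elim (NormedSpace.exp (A + B))
      (NormedSpace.exp A * NormedSpace.exp B)]
  · haveI : NeZero N := ⟨hN.ne'⟩
    exact abstract_segal hA.isSelfAdjoint hB.isSelfAdjoint
end

section
/- The following identity between Gaussian integrals over ℝ³ × ℝ³ holds: (1/(2π))³ ∫_{ℝ⁶} e^{−(‖a‖² + ‖b‖²)/2} cosh‖a‖ · cosh‖b‖ da db = (4/3) · (1/(2π))³ ∫_{ℝ⁶} e^{−(‖a‖² + ‖b‖²)/2} cosh‖a + b‖ da db; in particular both integrals are finite. Equivalently, for 2×2 random traceless Hermitian matrices A = ∑ᵢ aᵢσᵢ, B = ∑ᵢ bᵢσᵢ with all six coefficients independent standard Gaussians, E[Tr(e^A e^B)] = (4/3) E[Tr(e^{A+B})]. -/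
open MeasureTheory Real Set

-- 1D integrability
lemma gauss1d_integrable (c : ℝ) :
    Integrable (fun x : ℝ => x ^ 2 * Real.exp (-x ^ 2 / 2 + c * x)) := by
  have h4 : (0:ℝ) < 1/4 := by norm_num
  have hbase : Integrable (fun x : ℝ => x ^ 2 * Real.exp (-(1/4) * x ^ 2)) := by
    have := integrable_rpow_mul_exp_neg_mul_sq h4 (s := 2) (by norm_num)
    simpa [Real.rpow_natCast] using this
  refine (hbase.const_mul (Real.exp (c ^ 2))).mono' ?_ ?_
  · exact (Continuous.mul (by continuity) (by continuity)).aestronglyMeasurable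
  · filter_upwards with x
    have h1 : -x ^ 2 / 2 + c * x ≤ c ^ 2 + -(1/4) * x ^ 2 := by nlinarith [sq_nonneg (x/2 - c), sq_nonneg (x/2 + c), sq_nonneg x]
    have : Real.exp (-x ^ 2 / 2 + c * x) ≤ Real.exp (c ^ 2) * Real.exp (-(1/4) * x ^ 2) := by
      rw [← Real.exp_add]; exact Real.exp_le_exp.2 h1
    have hx2 : (0:ℝ) ≤ x ^ 2 := sq_nonneg x
    rw [Real.norm_eq_abs, abs_of_nonneg (by positivity)]
    calc x ^ 2 * Real.exp (-x ^ 2 / 2 + c * x)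
        ≤ x ^ 2 * (Real.exp (c ^ 2) * Real.exp (-(1/4) * x ^ 2)) := by
          exact mul_le_mul_of_nonneg_left this hx2
      _ = Real.exp (c ^ 2) * (x ^ 2 * Real.exp (-(1/4) * x ^ 2)) := by ring

lemma sq_gauss_integral : ∫ x : ℝ, x ^ 2 * Real.exp (-(1/2) * x ^ 2) = Real.sqrt (2 * π) := by
  have h : ∫ x : ℝ, x ^ 2 * Real.exp (-(1/2) * x ^ 2)
      = 2 * ∫ x in Ioi (0:ℝ), x ^ 2 * Real.exp (-(1/2) * x ^ 2) := by
    rw [← integral_comp_abs (f := fun x => x ^ 2 * Real.exp (-(1/2) * x ^ 2))]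
    congr 1 with x
    rw [sq_abs]
  rw [h]
  have h2 : ∫ x in Ioi (0:ℝ), x ^ 2 * Real.exp (-(1/2) * x ^ 2)
      = ∫ x in Ioi (0:ℝ), x ^ (2:ℝ) * Real.exp (-(1/2) * x ^ (2:ℝ)) := by
    refine setIntegral_congr_fun measurableSet_Ioi (fun x hx => ?_)
    rw [← Real.rpow_natCast x 2]; norm_num
  rw [h2, integral_rpow_mul_exp_neg_mul_rpow (by norm_num) (by norm_num) (by norm_num)]
  have : ((2:ℝ) + 1) / 2 = 3/2 := by norm_num
  rw [this]
  have hg : Real.Gamma (3/2) = Real.sqrt π / 2 := by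
    have : (3/2 : ℝ) = 1/2 + 1 := by norm_num
    rw [this, Real.Gamma_add_one (by norm_num), Real.Gamma_one_half_eq]; ring
  rw [hg]
  rw [show (-((2:ℝ)+1)/2) = (-(3/2) : ℝ) by norm_num]
  have h12 : ((1/2 : ℝ)) ^ ((-(3/2)):ℝ) = 2 * Real.sqrt 2 := by
    rw [one_div, Real.inv_rpow (by norm_num), ← Real.rpow_neg (by norm_num), neg_neg]
    rw [show ((3:ℝ)/2) = (1:ℝ) + 1/2 by norm_num, Real.rpow_add (by norm_num), Real.rpow_one,
      ← Real.sqrt_eq_rpow]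
  rw [h12, Real.sqrt_mul (by norm_num)]
  ring

lemma gauss1d_eval (c : ℝ) :
    ∫ x : ℝ, x ^ 2 * Real.exp (-x ^ 2 / 2 + c * x)
      = Real.sqrt (2 * π) * (1 + c ^ 2) * Real.exp (c ^ 2 / 2) := by
  have key : ∀ x : ℝ, x ^ 2 * Real.exp (-x ^ 2 / 2 + c * x)
      = Real.exp (c ^ 2 / 2) * (((x - c) + c) ^ 2 * Real.exp (-(1/2) * (x - c) ^ 2)) := by
    intro x
    have hx : (x - c + c) = x := by ring
    rw [hx, mul_left_comm, ← Real.exp_add]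
    congr 2
    ring
  simp_rw [key]
  rw [integral_const_mul]
  rw [integral_sub_right_eq_self (fun y : ℝ => (y + c) ^ 2 * Real.exp (-(1/2) * y ^ 2)) c]
  have expand : ∀ y : ℝ, (y + c) ^ 2 * Real.exp (-(1/2) * y ^ 2)
      = y ^ 2 * Real.exp (-(1/2) * y ^ 2) + ((2*c) * (y * Real.exp (-(1/2) * y ^ 2))
        + c ^ 2 * Real.exp (-(1/2) * y ^ 2)) := by intro y; ring
  simp_rw [expand]
  have h2 : Integrable (fun y : ℝ => y ^ 2 * Real.exp (-(1/2) * y ^ 2)) := by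
    have := integrable_rpow_mul_exp_neg_mul_sq (by norm_num : (0:ℝ) < 1/2) (s := 2) (by norm_num)
    simpa [Real.rpow_natCast] using this
  have h1 : Integrable (fun y : ℝ => y * Real.exp (-(1/2) * y ^ 2)) :=
    integrable_mul_exp_neg_mul_sq (by norm_num)
  have h0 : Integrable (fun y : ℝ => Real.exp (-(1/2) * y ^ 2)) :=
    integrable_exp_neg_mul_sq (by norm_num)
  have hA : Integrable (fun y : ℝ => (2*c) * (y * Real.exp (-(1/2) * y ^ 2))
      + c ^ 2 * Real.exp (-(1/2) * y ^ 2)) := (h1.const_mul _).add (h0.const_mul _)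
  rw [integral_add h2 hA, integral_add (h1.const_mul _) (h0.const_mul _),
    integral_const_mul, integral_const_mul]
  have hodd : ∫ y : ℝ, y * Real.exp (-(1/2) * y ^ 2) = 0 := by
    have h := integral_neg_eq_self (fun y : ℝ => y * Real.exp (-(1/2) * y ^ 2)) volume
    have e : (fun y : ℝ => (-y) * Real.exp (-(1/2) * (-y) ^ 2))
        = (fun y : ℝ => -(y * Real.exp (-(1/2) * y ^ 2))) := by
      funext y; rw [neg_sq]; ring
    rw [show (fun y : ℝ => (fun x : ℝ => x * Real.exp (-(1/2) * x ^ 2)) (-y)) = (fun y : ℝ => -(y * Real.exp (-(1/2) * y ^ 2))) from e, integral_neg] at h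
    linarith
  have hgauss : ∫ y : ℝ, Real.exp (-(1/2) * y ^ 2) = Real.sqrt (2 * π) := by
    rw [integral_gaussian, show π / (1/2:ℝ) = 2 * π by ring]
  rw [hodd, sq_gauss_integral, hgauss]
  ring

lemma cosh1d_integrable (c : ℝ) :
    Integrable (fun x : ℝ => x ^ 2 * (Real.exp (-x ^ 2 / 2) * Real.cosh (c * x))) := by
  have : ∀ x : ℝ, x ^ 2 * (Real.exp (-x ^ 2 / 2) * Real.cosh (c * x))
      = (1/2) * (x ^ 2 * Real.exp (-x ^ 2 / 2 + c * x))
        + (1/2) * (x ^ 2 * Real.exp (-x ^ 2 / 2 + (-c) * x)) := by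
    intro x
    rw [Real.cosh_eq, Real.exp_add, Real.exp_add]
    ring
  simp_rw [this]
  exact ((gauss1d_integrable c).const_mul _).add ((gauss1d_integrable (-c)).const_mul _)

lemma cosh1d_eval (c : ℝ) :
    ∫ x : ℝ, x ^ 2 * (Real.exp (-x ^ 2 / 2) * Real.cosh (c * x))
      = Real.sqrt (2 * π) * (1 + c ^ 2) * Real.exp (c ^ 2 / 2) := by
  have key : ∀ x : ℝ, x ^ 2 * (Real.exp (-x ^ 2 / 2) * Real.cosh (c * x))
      = (1/2) * (x ^ 2 * Real.exp (-x ^ 2 / 2 + c * x))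
        + (1/2) * (x ^ 2 * Real.exp (-x ^ 2 / 2 + (-c) * x)) := by
    intro x
    rw [Real.cosh_eq, Real.exp_add, Real.exp_add]
    ring
  simp_rw [key]
  rw [integral_add ((gauss1d_integrable c).const_mul _) ((gauss1d_integrable (-c)).const_mul _),
    integral_const_mul, integral_const_mul, gauss1d_eval, gauss1d_eval]
  rw [neg_sq]
  ring

lemma cosh1d_Ioi (c : ℝ) :
    ∫ x in Set.Ioi (0:ℝ), x ^ 2 * (Real.exp (-x ^ 2 / 2) * Real.cosh (c * x))
      = Real.sqrt (2 * π) / 2 * (1 + c ^ 2) * Real.exp (c ^ 2 / 2) := by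
  have habs : ∀ x : ℝ, x ^ 2 * (Real.exp (-x ^ 2 / 2) * Real.cosh (c * x))
      = |x| ^ 2 * (Real.exp (-|x| ^ 2 / 2) * Real.cosh (c * |x|)) := by
    intro x
    rcases abs_cases x with ⟨h, _⟩ | ⟨h, _⟩
    · rw [h]
    · rw [h]; rw [show c * -x = -(c * x) by ring, Real.cosh_neg]; ring_nf
  have := integral_comp_abs (f := fun x : ℝ => x ^ 2 * (Real.exp (-x ^ 2 / 2) * Real.cosh (c * x)))
  rw [← funext habs] at this
  rw [cosh1d_eval c] at this
  linear_combination (-1/2 : ℝ) * this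

local notation "E3" => EuclideanSpace ℝ (Fin 3)

lemma gauss3d_integrable {b : ℝ} (hb : 0 < b) :
    Integrable (fun x : E3 => Real.exp (-b * ‖x‖ ^ 2)) := by
  have h := (GaussianFourier.integrable_cexp_neg_mul_sq_norm_add (V := E3)
    (b := (b : ℂ)) (by simpa using hb) 0 0).norm
  refine h.congr (Filter.Eventually.of_forall fun x => ?_)
  simp [Complex.norm_exp, ← Complex.ofReal_pow]

lemma I3_integrable (c : ℝ) :
    Integrable (fun x : E3 => Real.exp (-‖x‖ ^ 2 / 2) * Real.cosh (c * ‖x‖)) := by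
  have hcosh : ∀ s : ℝ, 0 ≤ s → Real.cosh s ≤ Real.exp s := by
    intro s hs
    rw [Real.cosh_eq]
    have := Real.exp_le_exp.2 (neg_le_self hs)
    linarith
  refine ((gauss3d_integrable (by norm_num : (0:ℝ) < 1/4)).const_mul
    (Real.exp (c ^ 2))).mono' ?_ ?_
  · exact (Continuous.mul (by continuity) (by continuity)).aestronglyMeasurable
  · filter_upwards with x
    set r := ‖x‖ with hr
    have hr0 : 0 ≤ r := norm_nonneg x
    have h1 : Real.cosh (c * r) ≤ Real.exp (|c| * r) := by
      rw [← Real.cosh_abs, abs_mul, abs_of_nonneg hr0]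
      exact hcosh _ (by positivity)
    have h2 : -r ^ 2 / 2 + |c| * r ≤ c ^ 2 + -(1/4) * r ^ 2 := by
      nlinarith [sq_nonneg (r / 2 - |c|), sq_abs c]
    rw [Real.norm_eq_abs, abs_of_nonneg (by positivity)]
    calc Real.exp (-r ^ 2 / 2) * Real.cosh (c * r)
        ≤ Real.exp (-r ^ 2 / 2) * Real.exp (|c| * r) :=
          mul_le_mul_of_nonneg_left h1 (Real.exp_nonneg _)
      _ = Real.exp (-r ^ 2 / 2 + |c| * r) := (Real.exp_add _ _).symm
      _ ≤ Real.exp (c ^ 2 + -(1/4) * r ^ 2) := Real.exp_le_exp.2 h2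
      _ = Real.exp (c ^ 2) * Real.exp (-(1/4) * r ^ 2) := Real.exp_add _ _

lemma ball_vol_3 : (volume (Metric.ball (0 : E3) 1)).toReal = π * (4/3) := by
  rw [EuclideanSpace.volume_ball, Fintype.card_fin]
  have hg : Real.Gamma ((3:ℕ) / 2 + 1) = 3/4 * Real.sqrt π := by
    push_cast
    rw [Real.Gamma_add_one (by norm_num)]
    rw [show (3:ℝ)/2 = 1/2 + 1 by norm_num, Real.Gamma_add_one (by norm_num),
      Real.Gamma_one_half_eq]
    ring
  rw [hg]
  have hπ : (0:ℝ) ≤ π := Real.pi_pos.le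
  have hsq : Real.sqrt π * Real.sqrt π = π := Real.mul_self_sqrt hπ
  have hsπ : 0 < Real.sqrt π := Real.sqrt_pos.2 Real.pi_pos
  rw [ENNReal.toReal_mul, ENNReal.toReal_pow, ENNReal.toReal_ofReal (by norm_num),
    ENNReal.toReal_ofReal (by positivity)]
  rw [show Real.sqrt π ^ 3 = π * Real.sqrt π by rw [pow_succ, pow_two, hsq]]
  field_simp

lemma I3_eval (c : ℝ) :
    ∫ x : E3, Real.exp (-‖x‖ ^ 2 / 2) * Real.cosh (c * ‖x‖)
      = 2 * π * Real.sqrt (2 * π) * (1 + c ^ 2) * Real.exp (c ^ 2 / 2) := by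
  have h := MeasureTheory.integral_fun_norm_addHaar (volume : Measure E3)
    (fun r : ℝ => Real.exp (-r ^ 2 / 2) * Real.cosh (c * r))
  rw [finrank_euclideanSpace_fin] at h
  simp only [smul_eq_mul, nsmul_eq_mul, Nat.cast_ofNat] at h
  rw [h, measureReal_def, ball_vol_3]
  have : ∫ y in Set.Ioi (0:ℝ), y ^ (3 - 1) * (Real.exp (-y ^ 2 / 2) * Real.cosh (c * y))
      = Real.sqrt (2 * π) / 2 * (1 + c ^ 2) * Real.exp (c ^ 2 / 2) := by
    simpa using cosh1d_Ioi c
  rw [this]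
  ring

lemma gauss3d_eval : ∫ x : E3, Real.exp (-1 * ‖x‖ ^ 2) = π * Real.sqrt π := by
  rw [GaussianFourier.integral_rexp_neg_mul_sq_norm (by norm_num : (0:ℝ) < 1)]
  rw [finrank_euclideanSpace_fin, div_one]
  push_cast
  rw [show (3:ℝ)/2 = 1 + 1/2 by norm_num, Real.rpow_add Real.pi_pos, Real.rpow_one,
    ← Real.sqrt_eq_rpow]

noncomputable def shearE3 : (E3 × E3) ≃ᵐ (E3 × E3) where
  toEquiv :=
    { toFun := fun z => (z.1 - z.2, z.2)
      invFun := fun z => (z.1 + z.2, z.2)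
      left_inv := fun z => by simp
      right_inv := fun z => by simp }
  measurable_toFun := (measurable_fst.sub measurable_snd).prodMk measurable_snd
  measurable_invFun := (measurable_fst.add measurable_snd).prodMk measurable_snd

lemma cosh_le_exp_of_nonneg {s : ℝ} (hs : 0 ≤ s) : Real.cosh s ≤ Real.exp s := by
  rw [Real.cosh_eq]
  have := Real.exp_le_exp.2 (neg_le_self hs)
  linarith

set_option maxHeartbeats 1000000 in
/-- The Gaussian-average version of the Golden–Thompson inequality for `2 × 2` traceless Hermitian
matrices `A = ∑ aᵢ σᵢ`, `B = ∑ bᵢ σᵢ` with independent standard Gaussian coefficients: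
`E [Tr (e^A e^B)] = (4/3) E [Tr (e^{A+B})]`, expressed as an identity between Gaussian integrals
over `ℝ³ × ℝ³`; in particular both integrals are finite. -/
theorem gaussian_average_golden_thompson_ratio :
    Integrable (fun p : EuclideanSpace ℝ (Fin 3) × EuclideanSpace ℝ (Fin 3) =>
      Real.exp (-(‖p.1‖ ^ 2 + ‖p.2‖ ^ 2) / 2) * (Real.cosh ‖p.1‖ * Real.cosh ‖p.2‖)) ∧
    Integrable (fun p : EuclideanSpace ℝ (Fin 3) × EuclideanSpace ℝ (Fin 3) =>
      Real.exp (-(‖p.1‖ ^ 2 + ‖p.2‖ ^ 2) / 2) * Real.cosh ‖p.1 + p.2‖) ∧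
    (1 / (2 * Real.pi)) ^ 3 *
        ∫ p : EuclideanSpace ℝ (Fin 3) × EuclideanSpace ℝ (Fin 3),
          Real.exp (-(‖p.1‖ ^ 2 + ‖p.2‖ ^ 2) / 2) * (Real.cosh ‖p.1‖ * Real.cosh ‖p.2‖) =
      (4 / 3) * ((1 / (2 * Real.pi)) ^ 3 *
        ∫ p : EuclideanSpace ℝ (Fin 3) × EuclideanSpace ℝ (Fin 3),
          Real.exp (-(‖p.1‖ ^ 2 + ‖p.2‖ ^ 2) / 2) * Real.cosh ‖p.1 + p.2‖) := by
  have hfact : ∀ p : E3 × E3,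
      Real.exp (-(‖p.1‖ ^ 2 + ‖p.2‖ ^ 2) / 2) * (Real.cosh ‖p.1‖ * Real.cosh ‖p.2‖)
      = (Real.exp (-‖p.1‖ ^ 2 / 2) * Real.cosh (1 * ‖p.1‖))
        * (Real.exp (-‖p.2‖ ^ 2 / 2) * Real.cosh (1 * ‖p.2‖)) := by
    intro p
    rw [show -(‖p.1‖ ^ 2 + ‖p.2‖ ^ 2) / 2 = -‖p.1‖ ^ 2 / 2 + -‖p.2‖ ^ 2 / 2 by ring,
      Real.exp_add, one_mul, one_mul]
    ring
  have hLint : Integrable (fun p : E3 × E3 =>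
      Real.exp (-(‖p.1‖ ^ 2 + ‖p.2‖ ^ 2) / 2) * (Real.cosh ‖p.1‖ * Real.cosh ‖p.2‖)) := by
    rw [MeasureTheory.Measure.volume_eq_prod]
    exact ((I3_integrable 1).mul_prod (I3_integrable 1)).congr
      (Filter.Eventually.of_forall fun p => (hfact p).symm)
  -- integrability of the RHS integrand
  have hgbound : Integrable (fun p : E3 × E3 =>
      (Real.exp 1 * Real.exp (-(1/4) * ‖p.1‖ ^ 2))
        * (Real.exp 1 * Real.exp (-(1/4) * ‖p.2‖ ^ 2))) := by
    rw [MeasureTheory.Measure.volume_eq_prod]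
    exact ((gauss3d_integrable (by norm_num)).const_mul _).mul_prod
      ((gauss3d_integrable (by norm_num)).const_mul _)
  have hgint : Integrable (fun p : E3 × E3 =>
      Real.exp (-(‖p.1‖ ^ 2 + ‖p.2‖ ^ 2) / 2) * Real.cosh ‖p.1 + p.2‖) := by
    refine hgbound.mono' ?_ ?_
    · exact (Continuous.mul (by continuity) (by continuity)).aestronglyMeasurable
    · filter_upwards with p
      set x := ‖p.1‖ with hx
      set y := ‖p.2‖ with hy
      have hx0 : 0 ≤ x := norm_nonneg _
      have hy0 : 0 ≤ y := norm_nonneg _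
      have hxy : ‖p.1 + p.2‖ ≤ x + y := norm_add_le _ _
      have h1 : Real.cosh ‖p.1 + p.2‖ ≤ Real.exp (x + y) := by
        refine le_trans (Real.cosh_le_cosh.2 ?_) (cosh_le_exp_of_nonneg (by positivity))
        rw [abs_of_nonneg (norm_nonneg _), abs_of_nonneg (by positivity)]
        exact hxy
      have h2 : -(x ^ 2 + y ^ 2) / 2 + (x + y)
          ≤ (1 + -(1/4) * x ^ 2) + (1 + -(1/4) * y ^ 2) := by
        nlinarith [sq_nonneg (x/2 - 1), sq_nonneg (y/2 - 1)]
      rw [Real.norm_eq_abs, abs_of_nonneg (mul_nonneg (Real.exp_nonneg _) (Real.cosh_pos _).le)]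
      calc Real.exp (-(x ^ 2 + y ^ 2) / 2) * Real.cosh ‖p.1 + p.2‖
          ≤ Real.exp (-(x ^ 2 + y ^ 2) / 2) * Real.exp (x + y) :=
            mul_le_mul_of_nonneg_left h1 (Real.exp_nonneg _)
        _ = Real.exp (-(x ^ 2 + y ^ 2) / 2 + (x + y)) := (Real.exp_add _ _).symm
        _ ≤ Real.exp ((1 + -(1/4) * x ^ 2) + (1 + -(1/4) * y ^ 2)) := Real.exp_le_exp.2 h2
        _ = (Real.exp 1 * Real.exp (-(1/4) * x ^ 2))
            * (Real.exp 1 * Real.exp (-(1/4) * y ^ 2)) := by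
            rw [← Real.exp_add, ← Real.exp_add, ← Real.exp_add]
  refine ⟨hLint, hgint, ?_⟩
  have hLval : (∫ p : E3 × E3,
      Real.exp (-(‖p.1‖ ^ 2 + ‖p.2‖ ^ 2) / 2) * (Real.cosh ‖p.1‖ * Real.cosh ‖p.2‖))
      = 32 * π ^ 3 * Real.exp 1 := by
    simp_rw [hfact]
    rw [MeasureTheory.Measure.volume_eq_prod, integral_prod_mul (fun a : E3 => Real.exp (-‖a‖ ^ 2 / 2) * Real.cosh (1 * ‖a‖)) (fun a : E3 => Real.exp (-‖a‖ ^ 2 / 2) * Real.cosh (1 * ‖a‖)), I3_eval 1]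
    have ht : Real.sqrt 2 * Real.sqrt 2 = 2 := Real.mul_self_sqrt (by norm_num)
    have hu : Real.sqrt π * Real.sqrt π = π := Real.mul_self_sqrt Real.pi_pos.le
    have he : Real.exp ((1:ℝ)/2) * Real.exp ((1:ℝ)/2) = Real.exp 1 := by
      rw [← Real.exp_add]; norm_num
    rw [Real.sqrt_mul (by norm_num : (0:ℝ) ≤ 2) π]
    norm_num
    linear_combination (16*π^2*(Real.sqrt π * Real.sqrt π)
        * (Real.exp ((1:ℝ)/2) * Real.exp ((1:ℝ)/2))) * ht
      + (32*π^2*(Real.exp ((1:ℝ)/2) * Real.exp ((1:ℝ)/2))) * hu + 32*π^3 * he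
  have hmp : MeasurePreserving (⇑shearE3)
      ((volume : Measure E3).prod volume) ((volume : Measure E3).prod volume) :=
    measurePreserving_sub_prod volume volume
  have hshear : ∀ z : E3 × E3, shearE3 z = (z.1 - z.2, z.2) := fun z => rfl
  have hkey : ∀ z : E3 × E3,
      Real.exp (-(‖z.1 - z.2‖ ^ 2 + ‖z.2‖ ^ 2) / 2) * Real.cosh ‖z.1 - z.2 + z.2‖
      = (Real.cosh ‖z.1‖ * Real.exp (-‖z.1‖ ^ 2 / 4))
          * Real.exp (-1 * ‖z.2 - (2⁻¹ : ℝ) • z.1‖ ^ 2) := by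
    intro z
    rw [sub_add_cancel]
    have h1 : ‖z.1 - z.2‖ ^ 2 = ‖z.1‖ ^ 2 - 2 * (inner ℝ z.1 z.2 : ℝ) + ‖z.2‖ ^ 2 :=
      norm_sub_sq_real _ _
    have h2 : ‖z.2 - (2⁻¹ : ℝ) • z.1‖ ^ 2
        = ‖z.2‖ ^ 2 - 2 * (inner ℝ z.2 ((2⁻¹ : ℝ) • z.1) : ℝ) + ‖(2⁻¹ : ℝ) • z.1‖ ^ 2 :=
      norm_sub_sq_real _ _
    have h3 : (inner ℝ z.2 ((2⁻¹ : ℝ) • z.1) : ℝ) = 2⁻¹ * (inner ℝ z.2 z.1 : ℝ) :=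
      real_inner_smul_right _ _ _
    have h4 : ‖(2⁻¹ : ℝ) • z.1‖ ^ 2 = 4⁻¹ * ‖z.1‖ ^ 2 := by
      rw [norm_smul, mul_pow, Real.norm_eq_abs]
      norm_num
    have h5 : (inner ℝ z.1 z.2 : ℝ) = (inner ℝ z.2 z.1 : ℝ) := real_inner_comm _ _
    have hexp : -(‖z.1 - z.2‖ ^ 2 + ‖z.2‖ ^ 2) / 2
        = -‖z.1‖ ^ 2 / 4 + -1 * ‖z.2 - (2⁻¹ : ℝ) • z.1‖ ^ 2 := by
      rw [h1, h2, h3, h4, h5]; ring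
    rw [hexp, Real.exp_add]; ring
  have hRval : (∫ p : E3 × E3,
      Real.exp (-(‖p.1‖ ^ 2 + ‖p.2‖ ^ 2) / 2) * Real.cosh ‖p.1 + p.2‖)
      = 24 * π ^ 3 * Real.exp 1 := by
    have hg' : Integrable ((fun p : E3 × E3 =>
        Real.exp (-(‖p.1‖ ^ 2 + ‖p.2‖ ^ 2) / 2) * Real.cosh ‖p.1 + p.2‖) ∘ ⇑shearE3)
        ((volume : Measure E3).prod volume) := by
      have h := hgint
      rw [MeasureTheory.Measure.volume_eq_prod] at h
      exact (hmp.integrable_comp_emb shearE3.measurableEmbedding).2 h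
    have hint2 : Integrable (fun z : E3 × E3 =>
        (Real.cosh ‖z.1‖ * Real.exp (-‖z.1‖ ^ 2 / 4))
          * Real.exp (-1 * ‖z.2 - (2⁻¹ : ℝ) • z.1‖ ^ 2))
        ((volume : Measure E3).prod volume) := by
      refine hg'.congr (Filter.Eventually.of_forall fun z => ?_)
      show Real.exp (-(‖(z.1 - z.2, z.2).1‖ ^ 2 + ‖(z.1 - z.2, z.2).2‖ ^ 2) / 2)
          * Real.cosh ‖(z.1 - z.2, z.2).1 + (z.1 - z.2, z.2).2‖ = _
      exact hkey z
    rw [MeasureTheory.Measure.volume_eq_prod]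
    rw [← hmp.integral_comp' (fun p : E3 × E3 =>
      Real.exp (-(‖p.1‖ ^ 2 + ‖p.2‖ ^ 2) / 2) * Real.cosh ‖p.1 + p.2‖)]
    have hcongr : ∫ z : E3 × E3, (fun p : E3 × E3 =>
        Real.exp (-(‖p.1‖ ^ 2 + ‖p.2‖ ^ 2) / 2) * Real.cosh ‖p.1 + p.2‖) (shearE3 z)
        ∂((volume : Measure E3).prod volume)
        = ∫ z : E3 × E3, (Real.cosh ‖z.1‖ * Real.exp (-‖z.1‖ ^ 2 / 4))
            * Real.exp (-1 * ‖z.2 - (2⁻¹ : ℝ) • z.1‖ ^ 2)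
            ∂((volume : Measure E3).prod volume) := by
      refine integral_congr_ae (Filter.Eventually.of_forall fun z => ?_)
      exact hkey z
    rw [hcongr, integral_prod _ hint2]
    have hin : ∀ x : E3, (∫ y : E3, (Real.cosh ‖x‖ * Real.exp (-‖x‖ ^ 2 / 4))
        * Real.exp (-1 * ‖y - (2⁻¹ : ℝ) • x‖ ^ 2))
        = (Real.cosh ‖x‖ * Real.exp (-‖x‖ ^ 2 / 4)) * (π * Real.sqrt π) := by
      intro x
      rw [integral_const_mul]
      congr 1
      rw [integral_sub_right_eq_self (fun w : E3 => Real.exp (-1 * ‖w‖ ^ 2)) ((2⁻¹ : ℝ) • x)]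
      exact gauss3d_eval
    simp_rw [hin]
    rw [integral_mul_const]
    have hsmul := MeasureTheory.Measure.integral_comp_smul_of_nonneg (volume : Measure E3)
      (fun y : E3 => Real.cosh ‖y‖ * Real.exp (-‖y‖ ^ 2 / 4)) (Real.sqrt 2)
      (hR := Real.sqrt_nonneg 2)
    rw [finrank_euclideanSpace_fin] at hsmul
    have hfun : ∀ x : E3, Real.cosh ‖Real.sqrt 2 • x‖ * Real.exp (-‖Real.sqrt 2 • x‖ ^ 2 / 4)
        = Real.exp (-‖x‖ ^ 2 / 2) * Real.cosh (Real.sqrt 2 * ‖x‖) := by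
      intro x
      have hn : ‖Real.sqrt 2 • x‖ = Real.sqrt 2 * ‖x‖ := by
        rw [norm_smul, Real.norm_eq_abs, abs_of_nonneg (Real.sqrt_nonneg 2)]
      rw [hn, mul_pow, Real.sq_sqrt (by norm_num : (0:ℝ) ≤ 2),
        show -(2 * ‖x‖ ^ 2) / 4 = -‖x‖ ^ 2 / 2 by ring, mul_comm]
    simp_rw [hfun] at hsmul
    rw [I3_eval (Real.sqrt 2)] at hsmul
    rw [smul_eq_mul] at hsmul
    have hJ : (∫ y : E3, Real.cosh ‖y‖ * Real.exp (-‖y‖ ^ 2 / 4))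
        = Real.sqrt 2 ^ 3 * (2 * π * Real.sqrt (2 * π) * (1 + Real.sqrt 2 ^ 2)
            * Real.exp (Real.sqrt 2 ^ 2 / 2)) := by
      have h2 : (Real.sqrt 2 ^ 3)⁻¹ ≠ 0 := by positivity
      field_simp at hsmul ⊢
      linarith [hsmul]
    rw [hJ, Real.sq_sqrt (by norm_num : (0:ℝ) ≤ 2)]
    have ht : Real.sqrt 2 * Real.sqrt 2 = 2 := Real.mul_self_sqrt (by norm_num)
    have hu : Real.sqrt π * Real.sqrt π = π := Real.mul_self_sqrt Real.pi_pos.le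
    rw [Real.sqrt_mul (by norm_num : (0:ℝ) ≤ 2) π]
    norm_num
    linear_combination (6*π^2*(Real.sqrt π * Real.sqrt π)*(Real.sqrt 2 * Real.sqrt 2 + 2)
      * Real.exp 1) * ht + (24*π^2 * Real.exp 1) * hu
  rw [hLval, hRval]
  have hπ : π ≠ 0 := Real.pi_ne_zero
  field_simp
  ring
end
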